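/- arXiv:math-ph/0111047 — 2 statements merged into one kernel-verified Lean document; each statement's English description precedes it below -/
import Mathlib

section
/- There exist W₀ and constants c > 0 and K, independent of W, such that for all W ≥ W₀, all cubes Λ of side W in ℤ³, all E ∈ 𝓘, and all j ∈ Λ, the diagonal entries of B satisfy Re B_{jj} ≥ c/W² and |Im B_{jj}| ≤ K/W³. -/
open scoped BigOperators Topology
open Matrix MeasureTheory Filter

noncomputable section

/-- The discrete torus of side lengths `L i`; when each `L i` is a positive multiple of `W`,
this is a union of cubes of side `W` (containing `0`) with periodic boundary conditions. -/
abbrev Torus (L : Fin 3 → ℕ) := (i : Fin 3) → ZMod (L i)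

/-- Unit lattice vector in direction `i`. -/
def unitVec (L : Fin 3 → ℕ) (i : Fin 3) : Torus L := fun j => if j = i then 1 else 0

/-- Discrete Laplacian with periodic boundary conditions. -/
def lap (L : Fin 3 → ℕ) : Matrix (Torus L) (Torus L) ℝ :=
  Matrix.of fun x y =>
    (∑ i : Fin 3, ((if y = x + unitVec L i then (1 : ℝ) else 0) +
        (if y = x - unitVec L i then (1 : ℝ) else 0))) - (if y = x then 6 else 0)

/-- Distance to `0` in `ℤ/n`, via the minimal representative. -/
def zdist {n : ℕ} (x : ZMod n) : ℕ := min x.val (n - x.val)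

/-- Euclidean distance on the torus. -/
def tdist (L : Fin 3 → ℕ) (x y : Torus L) : ℝ :=
  Real.sqrt (∑ i : Fin 3, ((zdist (x i - y i) : ℝ)) ^ 2)

/-- The band covariance profile `J = (-W²Δ + 1)⁻¹`. -/
def Jmat (L : Fin 3 → ℕ) [∀ i, NeZero (L i)] (W : ℕ) : Matrix (Torus L) (Torus L) ℝ :=
  (((W : ℝ) ^ 2) • (-lap L) + 1)⁻¹

def mr2 (E : ℝ) : ℝ := 2 * (1 - E ^ 2 / 4)
def mi2 (E : ℝ) : ℝ := E * Real.sqrt (1 - E ^ 2 / 4)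
def mr (E : ℝ) : ℝ := Real.sqrt (mr2 E)

/-- `ℰ = E/2 - i√(1 - E²/4)`. -/
def calE (E : ℝ) : ℂ := ((E / 2 : ℝ) : ℂ) - (Real.sqrt (1 - E ^ 2 / 4) : ℝ) * Complex.I
/-- `ℰ̄ = E - ℰ = E/2 + i√(1 - E²/4)`, the complex conjugate of `ℰ`. -/
def calEbar (E : ℝ) : ℂ := ((E / 2 : ℝ) : ℂ) + (Real.sqrt (1 - E ^ 2 / 4) : ℝ) * Complex.I

/-- `C = (-W²Δ + m_r²)⁻¹`. -/
def Cmat (L : Fin 3 → ℕ) [∀ i, NeZero (L i)] (W : ℕ) (E : ℝ) : Matrix (Torus L) (Torus L) ℝ :=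
  (((W : ℝ) ^ 2) • (-lap L) + mr2 E • 1)⁻¹

/-- `B = (C⁻¹ + i m_i²·Id)⁻¹`. -/
def Bmat (L : Fin 3 → ℕ) [∀ i, NeZero (L i)] (W : ℕ) (E : ℝ) : Matrix (Torus L) (Torus L) ℂ :=
  (((Cmat L W E)⁻¹).map Complex.ofReal + (mi2 E * Complex.I) • 1)⁻¹

/-- The energy window `𝓘 = {E : η ≤ |E| ≤ 1.8}`. -/
def specI (η : ℝ) : Set ℝ := {E : ℝ | η ≤ |E| ∧ |E| ≤ 1.8}

/-- Wigner semicircle density `(1/π)√(1 - E²/4)`. -/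
def rhoSC (E : ℝ) : ℝ := Real.sqrt (1 - E ^ 2 / 4) / Real.pi

/-- Real quadratic form `aᵀ M a`. -/
def qf (L : Fin 3 → ℕ) [∀ i, NeZero (L i)] (M : Matrix (Torus L) (Torus L) ℝ)
    (a : Torus L → ℝ) : ℝ := a ⬝ᵥ M.mulVec a
namespace BdiagAux

open Complex Finset Real

/-- basic character value `exp(2πi a / W)`. -/
def e1 (W a : ℕ) : ℂ := Complex.exp ((2 * Real.pi * a / W : ℝ) * Complex.I)

lemma e1_zero (W : ℕ) : e1 W 0 = 1 := by simp [e1]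

lemma e1_add (W a b : ℕ) : e1 W (a + b) = e1 W a * e1 W b := by
  rw [e1, e1, e1, ← Complex.exp_add, ← add_mul, ← Complex.ofReal_add]
  congr 2
  push_cast
  ring

lemma e1_nat_mul (W a j : ℕ) : e1 W (a * j) = (e1 W a) ^ j := by
  rw [e1, e1, ← Complex.exp_nat_mul]
  congr 1
  push_cast
  ring

lemma e1_eq_one_of_dvd (W a : ℕ) (hW : W ≠ 0) (h : W ∣ a) : e1 W a = 1 := by
  obtain ⟨c, rfl⟩ := h
  rw [e1]
  have hr : (2 * Real.pi * (W * c : ℕ) / W : ℝ) = 2 * Real.pi * c := by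
    push_cast
    field_simp
  rw [hr]
  have : ((2 * Real.pi * c : ℝ) : ℂ) * Complex.I = (c : ℤ) * (2 * Real.pi * Complex.I) := by
    push_cast; ring
  rw [this, Complex.exp_int_mul_two_pi_mul_I]

lemma e1_mod (W a b : ℕ) (hW : W ≠ 0) (h : a % W = b % W) : e1 W a = e1 W b := by
  have ha : a = W * (a / W) + a % W := (Nat.div_add_mod a W).symm
  have hb : b = W * (b / W) + b % W := (Nat.div_add_mod b W).symm
  rw [ha, hb, e1_add, e1_add, e1_eq_one_of_dvd W _ hW ⟨_, rfl⟩,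
    e1_eq_one_of_dvd W _ hW ⟨_, rfl⟩, h]

lemma conj_e1 (W a : ℕ) :
    (starRingEnd ℂ) (e1 W a) = Complex.exp (-(((2 * Real.pi * a / W : ℝ) : ℂ) * Complex.I)) := by
  rw [e1, ← Complex.exp_conj]
  congr 1
  simp [Complex.conj_I, map_ofNat]

lemma conj_e1_mul (W a : ℕ) : (starRingEnd ℂ) (e1 W a) * e1 W a = 1 := by
  rw [conj_e1, e1, ← Complex.exp_add, neg_add_cancel, Complex.exp_zero]

lemma e1_add_conj (W a : ℕ) :
    e1 W a + (starRingEnd ℂ) (e1 W a) = ((2 * Real.cos (2 * Real.pi * a / W) : ℝ) : ℂ) := by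
  rw [e1, Complex.add_conj]
  norm_cast
  rw [Complex.exp_ofReal_mul_I_re]

lemma e1_ne_one (W a : ℕ) (hW : W ≠ 0) (h0 : a ≠ 0) (ha : a < W) : e1 W a ≠ 1 := by
  intro h
  rw [e1, Complex.exp_eq_one_iff] at h
  obtain ⟨n, hn⟩ := h
  have him := congrArg Complex.im hn
  simp [Complex.mul_im, Complex.mul_re] at him
  have hπ : (0:ℝ) < Real.pi := Real.pi_pos
  have hW' : (0:ℝ) < (W:ℝ) := by exact_mod_cast Nat.pos_of_ne_zero hW
  have h1 : (a:ℝ) = n * W := by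
    field_simp at him
    nlinarith [hπ]
  have h2 : (0:ℝ) < (a:ℝ) := by exact_mod_cast Nat.pos_of_ne_zero h0
  have h3 : (a:ℝ) < (W:ℝ) := by exact_mod_cast ha
  have hn0 : (0:ℝ) < (n:ℝ) := by nlinarith
  have hn1 : (1:ℤ) ≤ n := by
    have : (0:ℤ) < n := by exact_mod_cast hn0
    omega
  have : (1:ℝ) ≤ (n:ℝ) := by exact_mod_cast hn1
  nlinarith


variable {L : Fin 3 → ℕ}

/-- The character of the torus indexed by `k`. -/
def chi (W : ℕ) (L : Fin 3 → ℕ) (k x : Torus L) : ℂ :=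
  e1 W (∑ i, (k i).val * (x i).val)

lemma e1_sum (W : ℕ) {ι : Type*} (s : Finset ι) (f : ι → ℕ) :
    e1 W (∑ i ∈ s, f i) = ∏ i ∈ s, e1 W (f i) := by
  classical
  induction s using Finset.cons_induction with
  | empty => simp [e1_zero]
  | cons a s ha ih => rw [Finset.sum_cons, Finset.prod_cons, e1_add, ih]

lemma chi_comm (W : ℕ) (k x : Torus L) : chi W L k x = chi W L x k := by
  unfold chi
  congr 1
  exact Finset.sum_congr rfl fun i _ => Nat.mul_comm _ _

lemma chi_zero (W : ℕ) (k : Torus L) : chi W L k 0 = 1 := by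
  unfold chi
  have h : ∀ i ∈ Finset.univ, (k i).val * ((0 : Torus L) i).val = (fun _ => 0) i := by
    intro i _
    simp [ZMod.val_zero]
  rw [Finset.sum_congr rfl h]
  simp [e1_zero]

variable [∀ i, NeZero (L i)]

lemma chi_add {W : ℕ} (hW : W ≠ 0) (hL : ∀ i, L i = W) (k x y : Torus L) :
    chi W L k (x + y) = chi W L k x * chi W L k y := by
  unfold chi
  rw [e1_sum, e1_sum, e1_sum, ← Finset.prod_mul_distrib]
  refine Finset.prod_congr rfl fun i _ => ?_
  rw [← e1_add]
  apply e1_mod W _ _ hW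
  have h : ((x + y) i).val ≡ (x i).val + (y i).val [MOD W] := by
    rw [← hL i]
    simp only [Pi.add_apply, ZMod.val_add]
    exact Nat.mod_modEq _ _
  rw [← Nat.mul_add]
  exact (h.mul_left ((k i).val))

lemma chi_mul_conj (W : ℕ) (k x : Torus L) :
    chi W L k x * (starRingEnd ℂ) (chi W L k x) = 1 := by
  rw [mul_comm]; exact conj_e1_mul _ _

lemma chi_sub {W : ℕ} (hW : W ≠ 0) (hL : ∀ i, L i = W) (k x y : Torus L) :
    chi W L k (x - y) = chi W L k x * (starRingEnd ℂ) (chi W L k y) := by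
  have h := chi_add hW hL k (x - y) y
  rw [sub_add_cancel] at h
  calc chi W L k (x - y)
      = chi W L k (x - y) * (chi W L k y * (starRingEnd ℂ) (chi W L k y)) := by
        rw [chi_mul_conj, mul_one]
    _ = (chi W L k (x - y) * chi W L k y) * (starRingEnd ℂ) (chi W L k y) := by ring
    _ = chi W L k x * (starRingEnd ℂ) (chi W L k y) := by rw [h]

lemma sum_coord {W : ℕ} (hW : 2 ≤ W) {n : ℕ} [NeZero n] (hn : n = W) (a : ℕ) (ha : a < W) :
    ∑ u : ZMod n, e1 W (a * u.val) = if a = 0 then (W : ℂ) else 0 := by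
  have hW0 : W ≠ 0 := by omega
  have hbij : ∑ u : ZMod n, e1 W (a * u.val) = ∑ j ∈ Finset.range W, (e1 W a) ^ j := by
    refine Finset.sum_nbij' (fun u => u.val) (fun j => ((j : ℕ) : ZMod n)) ?_ ?_ ?_ ?_ ?_
    · intro u _
      rw [Finset.mem_range, ← hn]
      exact ZMod.val_lt u
    · intro j _
      exact Finset.mem_univ _
    · intro u _
      exact ZMod.natCast_zmod_val u
    · intro j hj
      rw [Finset.mem_range, ← hn] at hj
      exact ZMod.val_cast_of_lt hj
    · intro u _
      rw [e1_nat_mul]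
  rw [hbij]
  by_cases h0 : a = 0
  · subst h0
    simp [e1_zero]
  · rw [if_neg h0]
    rw [geom_sum_eq (e1_ne_one W a hW0 h0 ha)]
    have : (e1 W a) ^ W = 1 := by
      rw [← e1_nat_mul]
      exact e1_eq_one_of_dvd W _ hW0 ⟨a, mul_comm a W⟩
    rw [this, sub_self, zero_div]

lemma sum_chi {W : ℕ} (hW : 2 ≤ W) (hL : ∀ i, L i = W) (z : Torus L) :
    ∑ k : Torus L, chi W L z k = if z = 0 then ((W : ℂ)) ^ 3 else 0 := by
  classical
  have h1 : ∀ k : Torus L, chi W L z k = ∏ i, e1 W ((z i).val * (k i).val) := fun k =>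
    e1_sum W Finset.univ _
  rw [Finset.sum_congr rfl fun k _ => h1 k]
  rw [← Fintype.prod_sum (fun i (u : ZMod (L i)) => e1 W ((z i).val * u.val))]
  have h2 : ∀ i : Fin 3, ∑ u : ZMod (L i), e1 W ((z i).val * u.val)
      = if (z i).val = 0 then (W : ℂ) else 0 := by
    intro i
    exact sum_coord hW (hL i) _ (by rw [← hL i]; exact ZMod.val_lt _)
  rw [Finset.prod_congr rfl fun i _ => h2 i]
  by_cases hz : z = 0
  · subst hz
    simp [Pi.zero_apply, ZMod.val_zero, Finset.prod_const, Finset.card_univ]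
  · have : ∃ i, ¬ (z i).val = 0 := by
      by_contra h
      push_neg at h
      apply hz
      funext i
      exact (ZMod.val_eq_zero _).mp (h i)
    obtain ⟨i, hi⟩ := this
    rw [if_neg hz]
    exact Finset.prod_eq_zero (Finset.mem_univ i) (if_neg hi)

lemma sum_chi_pair {W : ℕ} (hW : 2 ≤ W) (hL : ∀ i, L i = W) (x y : Torus L) :
    ∑ k : Torus L, chi W L k x * (starRingEnd ℂ) (chi W L k y)
      = if x = y then ((W : ℂ)) ^ 3 else 0 := by
  have hW0 : W ≠ 0 := by omega
  have h : ∀ k : Torus L, chi W L k x * (starRingEnd ℂ) (chi W L k y)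
      = chi W L (x - y) k := by
    intro k
    rw [← chi_sub hW0 hL, chi_comm]
  rw [Finset.sum_congr rfl fun k _ => h k, sum_chi hW hL]
  by_cases hxy : x = y
  · simp [hxy]
  · rw [if_neg hxy, if_neg (fun h => hxy (sub_eq_zero.mp h))]
/-- `C⁻¹` as an explicit matrix. -/
def Mtot (W : ℕ) (L : Fin 3 → ℕ) (E : ℝ) : Matrix (Torus L) (Torus L) ℝ :=
  ((W : ℝ) ^ 2) • (-lap L) + mr2 E • 1

/-- Eigenvalue of `C⁻¹` at frequency `k`. -/
def muk (W : ℕ) (L : Fin 3 → ℕ) (E : ℝ) (k : Torus L) : ℝ :=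
  (W : ℝ) ^ 2 * (∑ i, 2 * (1 - Real.cos (2 * Real.pi * (k i).val / W))) + mr2 E

/-- Candidate inverse of `C⁻¹ + z` via Fourier decomposition. -/
def Dmat (W : ℕ) (L : Fin 3 → ℕ) [∀ i, NeZero (L i)] (E : ℝ) (z : ℂ) :
    Matrix (Torus L) (Torus L) ℂ :=
  Matrix.of fun x y => ((W : ℂ) ^ 3)⁻¹ *
    ∑ k, chi W L k x * (starRingEnd ℂ) (chi W L k y) * ((((muk W L E k : ℝ)) : ℂ) + z)⁻¹

lemma chi_unitVec {W : ℕ} (hW : 2 ≤ W) (hL : ∀ i, L i = W) (k : Torus L) (i : Fin 3) :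
    chi W L k (unitVec L i) = e1 W ((k i).val) := by
  unfold chi
  congr 1
  rw [Finset.sum_eq_single i]
  · have : Fact (1 < L i) := ⟨by rw [hL i]; omega⟩
    simp [unitVec, ZMod.val_one]
  · intro j _ hj
    simp [unitVec, if_neg hj, ZMod.val_zero]
  · intro h
    exact absurd (Finset.mem_univ i) h

lemma sum_ite_chi {W : ℕ} (c : Torus L) (k : Torus L) :
    (∑ u, (if u = c then (1 : ℂ) else 0) * chi W L k u) = chi W L k c := by
  classical
  simp [ite_mul]

lemma sum_lap_chi {W : ℕ} (hW : 2 ≤ W) (hL : ∀ i, L i = W) (k x : Torus L) :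
    ∑ u, ((lap L x u : ℝ) : ℂ) * chi W L k u
      = (((∑ i, 2 * Real.cos (2 * Real.pi * (k i).val / W)) - 6 : ℝ) : ℂ) * chi W L k x := by
  classical
  have hW0 : W ≠ 0 := by omega
  have step1 : ∀ u : Torus L, ((lap L x u : ℝ) : ℂ)
      = (∑ i, ((if u = x + unitVec L i then (1 : ℂ) else 0)
          + (if u = x - unitVec L i then (1 : ℂ) else 0))) - (if u = x then (6 : ℂ) else 0) := by
    intro u
    simp only [lap, Matrix.of_apply]
    push_cast [apply_ite Complex.ofReal]
    rfl
  rw [Finset.sum_congr rfl fun u _ => by rw [step1 u]]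
  simp only [sub_mul, add_mul, Finset.sum_mul]
  rw [Finset.sum_sub_distrib, Finset.sum_comm]
  have step2 : ∀ i : Fin 3,
      (∑ u, ((if u = x + unitVec L i then (1 : ℂ) else 0) * chi W L k u
        + (if u = x - unitVec L i then (1 : ℂ) else 0) * chi W L k u))
      = chi W L k x * (((2 * Real.cos (2 * Real.pi * ((k i).val) / W) : ℝ)) : ℂ) := by
    intro i
    rw [Finset.sum_add_distrib, sum_ite_chi, sum_ite_chi]
    rw [chi_add hW0 hL, chi_sub hW0 hL, chi_unitVec hW hL]
    rw [← mul_add, ← e1_add_conj]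
  rw [Finset.sum_congr rfl fun i _ => step2 i]
  have step3 : (∑ u, (if u = x then (6 : ℂ) else 0) * chi W L k u) = 6 * chi W L k x := by
    simp [ite_mul]
  rw [step3, ← Finset.mul_sum]
  push_cast
  ring

lemma row_sum {W : ℕ} (hW : 2 ≤ W) (hL : ∀ i, L i = W) (E : ℝ) (z : ℂ) (k x : Torus L) :
    ∑ u, (((Mtot W L E).map Complex.ofReal + z • 1) x u) * chi W L k u
      = ((((muk W L E k : ℝ)) : ℂ) + z) * chi W L k x := by
  classical
  have hent : ∀ u : Torus L, ((Mtot W L E).map Complex.ofReal + z • 1) x u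
      = (W : ℂ) ^ 2 * (-((lap L x u : ℝ) : ℂ))
        + (((mr2 E : ℝ) : ℂ) + z) * (if x = u then (1 : ℂ) else 0) := by
    intro u
    simp only [Matrix.add_apply, Matrix.map_apply, Mtot, Matrix.smul_apply, Matrix.neg_apply,
      Matrix.one_apply, smul_eq_mul]
    push_cast [apply_ite Complex.ofReal]
    ring
  rw [Finset.sum_congr rfl fun u _ => by rw [hent u, add_mul]]
  rw [Finset.sum_add_distrib]
  have h1 : (∑ u, (W : ℂ) ^ 2 * (-((lap L x u : ℝ) : ℂ)) * chi W L k u)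
      = (W : ℂ) ^ 2 * (-((((∑ i, 2 * Real.cos (2 * Real.pi * (k i).val / W)) - 6 : ℝ) : ℂ)
          * chi W L k x)) := by
    have : ∀ u : Torus L, (W : ℂ) ^ 2 * (-((lap L x u : ℝ) : ℂ)) * chi W L k u
        = (W : ℂ) ^ 2 * (-(((lap L x u : ℝ) : ℂ) * chi W L k u)) := fun u => by ring
    rw [Finset.sum_congr rfl fun u _ => this u, ← Finset.mul_sum, Finset.sum_neg_distrib,
      sum_lap_chi hW hL]
  have h2 : (∑ u, ((((mr2 E : ℝ)) : ℂ) + z) * (if x = u then (1 : ℂ) else 0) * chi W L k u)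
      = ((((mr2 E : ℝ)) : ℂ) + z) * chi W L k x := by
    have : ∀ u : Torus L, ((((mr2 E : ℝ)) : ℂ) + z) * (if x = u then (1 : ℂ) else 0) * chi W L k u
        = ((((mr2 E : ℝ)) : ℂ) + z) * ((if x = u then (1 : ℂ) else 0) * chi W L k u) :=
      fun u => by ring
    rw [Finset.sum_congr rfl fun u _ => this u, ← Finset.mul_sum]
    congr 1
    simp [ite_mul]
  rw [h1, h2]
  have hsum : (∑ i, 2 * (1 - Real.cos (2 * Real.pi * ((k i).val) / W)))
      = 6 - ∑ i, 2 * Real.cos (2 * Real.pi * ((k i).val) / W) := by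
    rw [Fin.sum_univ_three, Fin.sum_univ_three]
    ring
  simp only [muk, hsum]
  push_cast
  ring

lemma Mz_mul_Dmat {W : ℕ} (hW : 2 ≤ W) (hL : ∀ i, L i = W) (E : ℝ) (z : ℂ)
    (hz : ∀ k : Torus L, ((((muk W L E k : ℝ)) : ℂ) + z) ≠ 0) :
    ((Mtot W L E).map Complex.ofReal + z • 1) * Dmat W L E z = 1 := by
  classical
  have hW0 : (W : ℂ) ^ 3 ≠ 0 := by
    have : (W : ℂ) ≠ 0 := by exact_mod_cast (by omega : W ≠ 0)
    exact pow_ne_zero 3 this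
  ext x y
  rw [Matrix.mul_apply]
  simp only [Dmat, Matrix.of_apply]
  have step1 : ∀ u : Torus L,
      (((Mtot W L E).map Complex.ofReal + z • 1) x u) * (((W : ℂ) ^ 3)⁻¹ *
        ∑ k, chi W L k u * (starRingEnd ℂ) (chi W L k y) * ((((muk W L E k : ℝ)) : ℂ) + z)⁻¹)
      = ((W : ℂ) ^ 3)⁻¹ * ∑ k, (((Mtot W L E).map Complex.ofReal + z • 1) x u * chi W L k u)
          * ((starRingEnd ℂ) (chi W L k y) * ((((muk W L E k : ℝ)) : ℂ) + z)⁻¹) := by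
    intro u
    rw [mul_left_comm]
    congr 1
    rw [Finset.mul_sum]
    refine Finset.sum_congr rfl fun k _ => ?_
    ring
  rw [Finset.sum_congr rfl fun u _ => step1 u, ← Finset.mul_sum, Finset.sum_comm]
  have step2 : ∀ k : Torus L,
      (∑ u, ((((Mtot W L E).map Complex.ofReal + z • 1) x u * chi W L k u)
          * ((starRingEnd ℂ) (chi W L k y) * ((((muk W L E k : ℝ)) : ℂ) + z)⁻¹)))
      = chi W L k x * (starRingEnd ℂ) (chi W L k y) := by
    intro k
    rw [← Finset.sum_mul, row_sum hW hL E z k x]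
    have : ((((muk W L E k : ℝ)) : ℂ) + z) * chi W L k x *
        ((starRingEnd ℂ) (chi W L k y) * ((((muk W L E k : ℝ)) : ℂ) + z)⁻¹)
        = (((((muk W L E k : ℝ)) : ℂ) + z) * ((((muk W L E k : ℝ)) : ℂ) + z)⁻¹)
          * (chi W L k x * (starRingEnd ℂ) (chi W L k y)) := by ring
    rw [this, mul_inv_cancel₀ (hz k), one_mul]
  rw [Finset.sum_congr rfl fun k _ => step2 k, sum_chi_pair hW hL x y, Matrix.one_apply]
  by_cases hxy : x = y
  · rw [if_pos hxy, if_pos hxy, inv_mul_cancel₀ hW0]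
  · rw [if_neg hxy, if_neg hxy, mul_zero]

lemma mr2_lb {E : ℝ} (hE : |E| ≤ 1.8) : 1/3 ≤ mr2 E := by
  have h1 : E ^ 2 ≤ 3.24 := by
    have := abs_nonneg E
    nlinarith [_root_.sq_abs E]
  unfold mr2
  nlinarith

lemma mr2_ub (E : ℝ) : mr2 E ≤ 2 := by
  unfold mr2
  nlinarith [sq_nonneg E]

lemma sum_cos_lb {W : ℕ} (k : Torus L) :
    0 ≤ ∑ i, 2 * (1 - Real.cos (2 * Real.pi * ((k i).val) / W)) := by
  refine Finset.sum_nonneg fun i _ => ?_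
  nlinarith [Real.cos_le_one (2 * Real.pi * ((k i).val) / W)]

lemma sum_cos_ub {W : ℕ} (k : Torus L) :
    (∑ i, 2 * (1 - Real.cos (2 * Real.pi * ((k i).val) / W))) ≤ 12 := by
  rw [Fin.sum_univ_three]
  nlinarith [Real.neg_one_le_cos (2 * Real.pi * ((k 0).val) / W),
    Real.neg_one_le_cos (2 * Real.pi * ((k 1).val) / W),
    Real.neg_one_le_cos (2 * Real.pi * ((k 2).val) / W)]

lemma muk_lb0 {W : ℕ} {E : ℝ} (hE : |E| ≤ 1.8) (k : Torus L) : 1/3 ≤ muk W L E k := by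
  unfold muk
  nlinarith [sum_cos_lb (W := W) k, mr2_lb hE, sq_nonneg (W:ℝ)]

lemma muk_ub {W : ℕ} (hW : 2 ≤ W) {E : ℝ} (k : Torus L) : muk W L E k ≤ 14 * (W:ℝ)^2 := by
  have h1 : (1:ℝ) ≤ (W:ℝ) := by exact_mod_cast (by omega : 1 ≤ W)
  unfold muk
  nlinarith [sum_cos_ub (W := W) k, mr2_ub E, sq_nonneg (W:ℝ)]

lemma Cmat_inv_eq {W : ℕ} (hW : 2 ≤ W) (hL : ∀ i, L i = W) (E : ℝ) (hE : |E| ≤ 1.8) :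
    (Cmat L W E)⁻¹ = Mtot W L E := by
  have hz : ∀ k : Torus L, ((((muk W L E k : ℝ)) : ℂ) + 0) ≠ 0 := by
    intro k
    rw [add_zero]
    exact_mod_cast (by linarith [muk_lb0 (W := W) hE k] : (muk W L E k) ≠ 0)
  have h0 : (Mtot W L E).map Complex.ofReal * Dmat W L E 0 = 1 := by
    have := Mz_mul_Dmat hW hL E 0 hz
    simpa using this
  have hdetC : IsUnit ((Mtot W L E).map Complex.ofReal).det :=
    Matrix.isUnit_det_of_right_inverse h0
  have hdet : IsUnit (Mtot W L E).det := by
    have hmap : ((Mtot W L E).map Complex.ofReal).det = ((Mtot W L E).det : ℂ) :=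
      (RingHom.map_det Complex.ofRealHom (Mtot W L E)).symm
    rw [hmap] at hdetC
    have : ((Mtot W L E).det : ℂ) ≠ 0 := hdetC.ne_zero
    exact isUnit_iff_ne_zero.mpr (by exact_mod_cast this)
  have hC : Cmat L W E = (Mtot W L E)⁻¹ := rfl
  rw [hC]
  exact Matrix.nonsing_inv_nonsing_inv _ hdet

lemma Bmat_eq {W : ℕ} (hW : 2 ≤ W) (hL : ∀ i, L i = W) (E : ℝ) (hE : |E| ≤ 1.8) :
    Bmat L W E = Dmat W L E ((mi2 E : ℝ) * Complex.I) := by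
  have hz : ∀ k : Torus L, ((((muk W L E k : ℝ)) : ℂ) + (mi2 E : ℝ) * Complex.I) ≠ 0 := by
    intro k h
    have hre := congrArg Complex.re h
    simp [Complex.add_re, Complex.mul_re] at hre
    have := muk_lb0 (W := W) hE k
    rw [hre] at this
    norm_num at this
  unfold Bmat
  rw [Cmat_inv_eq hW hL E hE]
  exact Matrix.inv_eq_right_inv (Mz_mul_Dmat hW hL E _ hz)

lemma Bdiag_formula {W : ℕ} (hW : 2 ≤ W) (hL : ∀ i, L i = W) (E : ℝ) (hE : |E| ≤ 1.8)
    (j : Torus L) :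
    Bmat L W E j j = ((W : ℂ) ^ 3)⁻¹ *
      ∑ k, ((((muk W L E k : ℝ)) : ℂ) + (mi2 E : ℝ) * Complex.I)⁻¹ := by
  rw [Bmat_eq hW hL E hE]
  simp only [Dmat, Matrix.of_apply]
  congr 1
  refine Finset.sum_congr rfl fun k _ => ?_
  rw [chi_mul_conj, one_mul]
/-! ### Counting estimates -/

lemma coord_lb {W : ℕ} (hW : 2 ≤ W) {n : ℕ} [NeZero n] (hn : n = W) (u : ZMod n) :
    16 * ((zdist u : ℕ) : ℝ) ^ 2 ≤ (W : ℝ) ^ 2 * (2 * (1 - Real.cos (2 * Real.pi * u.val / W))) := by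
  subst hn
  have hv : u.val < n := ZMod.val_lt u
  have hd2 : 2 * zdist u ≤ n := by
    unfold zdist
    omega
  have hWpos : (0 : ℝ) < (n : ℝ) := by
    have : n ≠ 0 := by omega
    exact_mod_cast Nat.pos_of_ne_zero this
  have hπ : (0 : ℝ) < Real.pi := Real.pi_pos
  have hcos : Real.cos (2 * Real.pi * u.val / n) = Real.cos (2 * Real.pi * (zdist u : ℕ) / n) := by
    rcases Nat.le_or_le u.val (n - u.val) with h | h
    · have : zdist u = u.val := by unfold zdist; omega
      rw [this]
    · have hz : zdist u = n - u.val := by unfold zdist; omega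
      have hval : ((u.val : ℕ) : ℝ) = (n : ℝ) - ((zdist u : ℕ) : ℝ) := by
        rw [hz]
        push_cast [Nat.cast_sub (le_of_lt hv)]
        ring
      rw [hval]
      have harg : 2 * Real.pi * ((n : ℝ) - ((zdist u : ℕ) : ℝ)) / n
          = 2 * Real.pi - 2 * Real.pi * ((zdist u : ℕ) : ℝ) / n := by
        field_simp
      rw [harg, Real.cos_two_pi_sub]
  rw [hcos]
  set d : ℝ := ((zdist u : ℕ) : ℝ) with hdd
  have hd0 : 0 ≤ d := Nat.cast_nonneg _
  have hdn : 2 * d ≤ (n : ℝ) := by rw [hdd]; exact_mod_cast hd2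
  set x : ℝ := 2 * Real.pi * d / n with hxx
  have hx0 : 0 ≤ x := by positivity
  have hxpi : x ≤ Real.pi := by
    rw [hxx, div_le_iff₀ hWpos]
    nlinarith
  have hJ : Real.cos x ≤ 1 - 2 / Real.pi ^ 2 * x ^ 2 :=
    Real.cos_le_one_sub_mul_cos_sq (by rw [_root_.abs_of_nonneg hx0]; exact hxpi)
  have hkey : 2 / Real.pi ^ 2 * x ^ 2 = 8 * d ^ 2 / (n : ℝ) ^ 2 := by
    rw [hxx]
    field_simp
    ring
  have h8 : 8 * d ^ 2 / (n : ℝ) ^ 2 ≤ 1 - Real.cos x := by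
    rw [← hkey]
    linarith
  have := mul_le_mul_of_nonneg_left h8 (by positivity : (0:ℝ) ≤ 2 * (n:ℝ)^2)
  calc 16 * d ^ 2 = 2 * (n:ℝ)^2 * (8 * d ^ 2 / (n : ℝ) ^ 2) := by
        field_simp
        ring
    _ ≤ 2 * (n:ℝ)^2 * (1 - Real.cos x) := this
    _ = (n : ℝ) ^ 2 * (2 * (1 - Real.cos x)) := by ring

/-- max of the coordinate distances. -/
def Rk (L : Fin 3 → ℕ) (k : Torus L) : ℕ := Finset.univ.sup fun i => zdist (k i)

lemma muk_lb16 {W : ℕ} (hW : 2 ≤ W) (hL : ∀ i, L i = W) {E : ℝ} (hE : |E| ≤ 1.8)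
    (k : Torus L) : 16 * ((Rk L k : ℕ) : ℝ) ^ 2 + 1/3 ≤ muk W L E k := by
  obtain ⟨i, _, hi⟩ := Finset.exists_mem_eq_sup (Finset.univ : Finset (Fin 3))
    ⟨0, Finset.mem_univ 0⟩ (fun i => zdist (k i))
  have h1 : 16 * ((Rk L k : ℕ) : ℝ) ^ 2 ≤ (W : ℝ) ^ 2 *
      (2 * (1 - Real.cos (2 * Real.pi * (k i).val / W))) := by
    rw [Rk, hi]
    exact coord_lb hW (hL i) (k i)
  have h2 : (2 * (1 - Real.cos (2 * Real.pi * (k i).val / W)))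
      ≤ ∑ i', 2 * (1 - Real.cos (2 * Real.pi * ((k i').val) / W)) := by
    refine Finset.single_le_sum (f := fun i' => 2 * (1 - Real.cos (2 * Real.pi * ((k i').val) / W)))
      (fun i' _ => by nlinarith [Real.cos_le_one (2 * Real.pi * ((k i').val) / W)])
      (Finset.mem_univ i)
  have h3 := mul_le_mul_of_nonneg_left h2 (by positivity : (0:ℝ) ≤ (W:ℝ)^2)
  have h4 := mr2_lb hE
  unfold muk
  linarith

lemma card_zdist_eq {n : ℕ} [NeZero n] (r : ℕ) :
    (Finset.univ.filter fun u : ZMod n => zdist u = r).card ≤ 2 := by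
  classical
  have hsub : (Finset.univ.filter fun u : ZMod n => zdist u = r)
      ⊆ {((r : ℕ) : ZMod n), ((n - r : ℕ) : ZMod n)} := by
    intro u hu
    rw [Finset.mem_filter] at hu
    have hv : u.val < n := ZMod.val_lt u
    have hz : u.val = r ∨ u.val = n - r := by
      have := hu.2
      unfold zdist at this
      omega
    have hu' : ((u.val : ℕ) : ZMod n) = u := ZMod.natCast_zmod_val u
    rcases hz with h | h
    · rw [Finset.mem_insert]
      left
      rw [← hu', h]
    · rw [Finset.mem_insert, Finset.mem_singleton]
      right
      rw [← hu', h]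
  calc (Finset.univ.filter fun u : ZMod n => zdist u = r).card
      ≤ ({((r : ℕ) : ZMod n), ((n - r : ℕ) : ZMod n)} : Finset (ZMod n)).card :=
        Finset.card_le_card hsub
    _ ≤ 2 := by
        apply le_trans (Finset.card_insert_le _ _)
        simp

lemma card_zdist_le {n : ℕ} [NeZero n] (r : ℕ) :
    (Finset.univ.filter fun u : ZMod n => zdist u ≤ r).card ≤ 2 * (r + 1) := by
  classical
  refine le_trans (Finset.card_le_card_of_injOn
    (fun u : ZMod n => if u.val ≤ r then u.val else (n - u.val) + (r + 1))
    ?_ ?_) (le_of_eq (Finset.card_range _))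
  · intro u hu
    rw [Finset.mem_coe, Finset.mem_filter] at hu
    have h2 := hu.2
    unfold zdist at h2
    have hv : u.val < n := ZMod.val_lt u
    rw [Finset.mem_coe, Finset.mem_range]
    simp only
    split_ifs with h'
    · omega
    · omega
  · intro u hu v hv huv
    rw [Finset.mem_coe, Finset.mem_filter] at hu hv
    have h2u := hu.2
    have h2v := hv.2
    unfold zdist at h2u h2v
    have hvu : u.val < n := ZMod.val_lt u
    have hvv : v.val < n := ZMod.val_lt v
    simp only at huv
    have : u.val = v.val := by
      split_ifs at huv <;> omega
    exact ZMod.val_injective n this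

lemma card_fiber {W : ℕ} (hL : ∀ i, L i = W) (r : ℕ) :
    ((Finset.univ : Finset (Torus L)).filter fun k => Rk L k = r).card ≤ 24 * (r + 1) ^ 2 := by
  classical
  set T : Fin 3 → Finset (Torus L) := fun i => Fintype.piFinset fun j =>
    Finset.univ.filter fun u : ZMod (L j) => if j = i then zdist u = r else zdist u ≤ r with hT
  have hsub : ((Finset.univ : Finset (Torus L)).filter fun k => Rk L k = r)
      ⊆ Finset.univ.biUnion T := by
    intro k hk
    rw [Finset.mem_filter] at hk
    obtain ⟨i, _, hi⟩ := Finset.exists_mem_eq_sup (Finset.univ : Finset (Fin 3))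
      ⟨0, Finset.mem_univ 0⟩ (fun i => zdist (k i))
    rw [Finset.mem_biUnion]
    refine ⟨i, Finset.mem_univ i, ?_⟩
    rw [hT, Fintype.mem_piFinset]
    intro j
    rw [Finset.mem_filter]
    refine ⟨Finset.mem_univ _, ?_⟩
    split_ifs with hj
    · subst hj
      rw [← hi, ← hk.2]
      rfl
    · calc zdist (k j) ≤ Finset.univ.sup fun i' => zdist (k i') := Finset.le_sup (f := fun i' => zdist (k i')) (Finset.mem_univ j)
        _ = r := hk.2
  have hTcard : ∀ i : Fin 3, (T i).card ≤ 8 * (r + 1) ^ 2 := by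
    intro i
    rw [hT, Fintype.card_piFinset]
    have hbound : ∀ j : Fin 3,
        (Finset.univ.filter fun u : ZMod (L j) => if j = i then zdist u = r else zdist u ≤ r).card
        ≤ if j = i then 2 else 2 * (r + 1) := by
      intro j
      by_cases hj : j = i
      · simp only [if_pos hj]
        exact card_zdist_eq r
      · simp only [if_neg hj]
        exact card_zdist_le r
    calc (∏ j, (Finset.univ.filter fun u : ZMod (L j) =>
            if j = i then zdist u = r else zdist u ≤ r).card)
        ≤ ∏ j, (if j = i then 2 else 2 * (r + 1)) :=
          Finset.prod_le_prod' fun j _ => hbound j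
      _ ≤ 8 * (r + 1) ^ 2 := by
          fin_cases i <;> simp [Fin.prod_univ_three] <;> ring_nf <;> omega
  calc ((Finset.univ : Finset (Torus L)).filter fun k => Rk L k = r).card
      ≤ (Finset.univ.biUnion T).card := Finset.card_le_card hsub
    _ ≤ ∑ i, (T i).card := Finset.card_biUnion_le
    _ ≤ ∑ _i : Fin 3, 8 * (r + 1) ^ 2 := Finset.sum_le_sum fun i _ => hTcard i
    _ = 24 * (r + 1) ^ 2 := by
        rw [Finset.sum_const, Finset.card_univ]
        simp [Fintype.card_fin]
        ring
lemma sum_inv_one_add_sq (n : ℕ) :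
    ∑ r ∈ Finset.range n, (1 + (r : ℝ) ^ 2)⁻¹ ≤ 3 := by
  cases n with
  | zero => norm_num
  | succ m =>
    rw [Finset.sum_range_succ']
    have h0 : (1 + ((0 : ℕ) : ℝ) ^ 2)⁻¹ = 1 := by norm_num
    have key : ∀ i ∈ Finset.range m,
        (1 + (((i + 1 : ℕ)) : ℝ) ^ 2)⁻¹ ≤ 2 / ((i : ℝ) + 1) - 2 / ((i : ℝ) + 2) := by
      intro i _
      have heq : 2 / ((i : ℝ) + 1) - 2 / ((i : ℝ) + 2) = 2 / (((i : ℝ) + 1) * ((i : ℝ) + 2)) := by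
        field_simp
        ring
      rw [heq, inv_eq_one_div, div_le_div_iff₀ (by positivity) (by positivity)]
      push_cast
      nlinarith [sq_nonneg (i : ℝ)]
    have htel : ∑ i ∈ Finset.range m, (2 / ((i : ℝ) + 1) - 2 / ((i : ℝ) + 2))
        = 2 / ((0 : ℕ) + 1 : ℝ) - 2 / ((m : ℝ) + 1) := by
      have h1 : ∀ i ∈ Finset.range m, (2 / ((i : ℝ) + 1) - 2 / ((i : ℝ) + 2))
          = (fun j : ℕ => 2 / ((j : ℝ) + 1)) i - (fun j : ℕ => 2 / ((j : ℝ) + 1)) (i + 1) := by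
        intro i _
        push_cast
        ring_nf
      rw [Finset.sum_congr rfl h1, Finset.sum_range_sub' (fun j : ℕ => 2 / ((j : ℝ) + 1)) m]
    have hm : (0 : ℝ) < (m : ℝ) + 1 := by positivity
    have hb := Finset.sum_le_sum key
    rw [htel] at hb
    have : 2 / ((m : ℝ) + 1) > 0 := by positivity
    rw [h0]
    push_cast at hb ⊢
    norm_num at hb
    linarith

lemma sum_muk_sq_inv {W : ℕ} (hW : 2 ≤ W) (hL : ∀ i, L i = W) {E : ℝ} (hE : |E| ≤ 1.8) :
    ∑ k : Torus L, ((muk W L E k) ^ 2)⁻¹ ≤ 1296 := by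
  classical
  have hmaps : ∀ k ∈ (Finset.univ : Finset (Torus L)), Rk L k ∈ Finset.range (W + 1) := by
    intro k _
    rw [Finset.mem_range]
    have hz : ∀ i, zdist (k i) < W + 1 := by
      intro i
      have h1 : (k i).val < L i := ZMod.val_lt _
      have h2 := hL i
      unfold zdist
      omega
    exact (Finset.sup_lt_iff (show (⊥ : ℕ) < W + 1 by rw [show (⊥:ℕ) = 0 from rfl]; omega)).mpr fun i _ => hz i
  rw [← Finset.sum_fiberwise_of_maps_to hmaps (fun k => ((muk W L E k) ^ 2)⁻¹)]
  have hinner : ∀ r ∈ Finset.range (W + 1),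
      (∑ k ∈ Finset.univ.filter fun k : Torus L => Rk L k = r, ((muk W L E k) ^ 2)⁻¹)
      ≤ 432 * (1 + (r : ℝ) ^ 2)⁻¹ := by
    intro r _
    have hp : (0 : ℝ) < 1 + (r : ℝ) ^ 2 := by positivity
    have hterm : ∀ k ∈ Finset.univ.filter (fun k : Torus L => Rk L k = r),
        ((muk W L E k) ^ 2)⁻¹ ≤ 9 * ((1 + (r : ℝ) ^ 2) ^ 2)⁻¹ := by
      intro k hk
      rw [Finset.mem_filter] at hk
      have hmu := muk_lb16 hW hL hE k
      rw [hk.2] at hmu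
      have h1 : (1 + (r : ℝ) ^ 2) / 3 ≤ muk W L E k := by nlinarith [sq_nonneg (r : ℝ)]
      have hmupos : (0 : ℝ) < muk W L E k := by linarith
      have h2 : ((1 + (r : ℝ) ^ 2) / 3) ^ 2 ≤ (muk W L E k) ^ 2 := by nlinarith
      have h3 := inv_anti₀ (by positivity : (0:ℝ) < ((1 + (r : ℝ) ^ 2) / 3) ^ 2) h2
      calc ((muk W L E k) ^ 2)⁻¹ ≤ (((1 + (r : ℝ) ^ 2) / 3) ^ 2)⁻¹ := h3
        _ = 9 * ((1 + (r : ℝ) ^ 2) ^ 2)⁻¹ := by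
            field_simp
            norm_num
    have hcard : ((Finset.univ.filter fun k : Torus L => Rk L k = r).card : ℝ)
        ≤ 24 * ((r : ℝ) + 1) ^ 2 := by
      have := card_fiber hL r
      have h24 : ((24 * (r + 1) ^ 2 : ℕ) : ℝ) = 24 * ((r : ℝ) + 1) ^ 2 := by push_cast; ring
      rw [← h24]
      exact_mod_cast this
    calc (∑ k ∈ Finset.univ.filter fun k : Torus L => Rk L k = r, ((muk W L E k) ^ 2)⁻¹)
        ≤ (Finset.univ.filter fun k : Torus L => Rk L k = r).card
            • (9 * ((1 + (r : ℝ) ^ 2) ^ 2)⁻¹) := Finset.sum_le_card_nsmul _ _ _ hterm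
      _ = ((Finset.univ.filter fun k : Torus L => Rk L k = r).card : ℝ)
            * (9 * ((1 + (r : ℝ) ^ 2) ^ 2)⁻¹) := nsmul_eq_mul _ _
      _ ≤ 24 * ((r : ℝ) + 1) ^ 2 * (9 * ((1 + (r : ℝ) ^ 2) ^ 2)⁻¹) :=
          mul_le_mul_of_nonneg_right hcard (by positivity)
      _ ≤ 432 * (1 + (r : ℝ) ^ 2)⁻¹ := by
          have h1 : ((r : ℝ) + 1) ^ 2 ≤ 2 * (1 + (r : ℝ) ^ 2) := by nlinarith [sq_nonneg ((r:ℝ) - 1)]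
          rw [show (24 : ℝ) * ((r : ℝ) + 1) ^ 2 * (9 * ((1 + (r : ℝ) ^ 2) ^ 2)⁻¹)
              = 216 * ((r : ℝ) + 1) ^ 2 / ((1 + (r : ℝ) ^ 2) ^ 2) from by ring,
            show (432 : ℝ) * (1 + (r : ℝ) ^ 2)⁻¹ = 432 / (1 + (r : ℝ) ^ 2) from by ring,
            div_le_div_iff₀ (by positivity) (by positivity)]
          nlinarith [mul_le_mul_of_nonneg_left h1 (by positivity : (0:ℝ) ≤ 216 * (1 + (r:ℝ)^2))]
  calc (∑ r ∈ Finset.range (W + 1),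
        ∑ k ∈ Finset.univ.filter fun k : Torus L => Rk L k = r, ((muk W L E k) ^ 2)⁻¹)
      ≤ ∑ r ∈ Finset.range (W + 1), 432 * (1 + (r : ℝ) ^ 2)⁻¹ := Finset.sum_le_sum hinner
    _ = 432 * ∑ r ∈ Finset.range (W + 1), (1 + (r : ℝ) ^ 2)⁻¹ := by rw [← Finset.mul_sum]
    _ ≤ 432 * 3 := by
        have := sum_inv_one_add_sq (W + 1)
        linarith
    _ = 1296 := by norm_num
lemma card_torus {W : ℕ} (hL : ∀ i, L i = W) : Fintype.card (Torus L) = W ^ 3 := by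
  rw [Fintype.card_pi]
  have h : ∀ i : Fin 3, Fintype.card (ZMod (L i)) = W := by
    intro i
    rw [ZMod.card, hL i]
  rw [Finset.prod_congr rfl fun i _ => h i, Finset.prod_const, Finset.card_univ,
    Fintype.card_fin]

lemma mi2_abs_le {E : ℝ} (hE : |E| ≤ 1.8) : |mi2 E| ≤ 2 := by
  unfold mi2
  rw [abs_mul]
  have h1 : |Real.sqrt (1 - E ^ 2 / 4)| ≤ 1 := by
    rw [_root_.abs_of_nonneg (Real.sqrt_nonneg _)]
    exact Real.sqrt_le_one.mpr (by nlinarith [sq_nonneg E])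
  have h2 : (0:ℝ) ≤ |E| := abs_nonneg E
  nlinarith

lemma term_re_eq (μ b : ℝ) : ((μ : ℂ) + (b : ℂ) * Complex.I)⁻¹.re = μ / (μ ^ 2 + b ^ 2) := by
  rw [Complex.inv_re, Complex.normSq_add_mul_I]
  congr 1
  simp

lemma term_im_eq (μ b : ℝ) : ((μ : ℂ) + (b : ℂ) * Complex.I)⁻¹.im = -b / (μ ^ 2 + b ^ 2) := by
  rw [Complex.inv_im, Complex.normSq_add_mul_I]
  congr 1
  simp

lemma final_re {W : ℕ} (hW : 2 ≤ W) (hL : ∀ i, L i = W) {E : ℝ} (hE : |E| ≤ 1.8)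
    (j : Torus L) : 1/518 / (W:ℝ)^2 ≤ (Bmat L W E j j).re := by
  have hWR : (2:ℝ) ≤ (W:ℝ) := by exact_mod_cast hW
  have hWpos : (0:ℝ) < (W:ℝ) := by linarith
  have hb := mi2_abs_le hE
  have hb2 : (mi2 E)^2 ≤ 4 := by nlinarith [abs_nonneg (mi2 E), _root_.sq_abs (mi2 E)]
  rw [Bdiag_formula hW hL E hE j]
  have hNc : ((W:ℂ)^3)⁻¹ = ((((W:ℝ)^3)⁻¹ : ℝ) : ℂ) := by
    rw [Complex.ofReal_inv, Complex.ofReal_pow, Complex.ofReal_natCast]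
  rw [hNc, Complex.re_ofReal_mul, Complex.re_sum]
  have hterm : ∀ k ∈ (Finset.univ : Finset (Torus L)),
      1/(518*(W:ℝ)^2) ≤ ((((muk W L E k : ℝ)) : ℂ) + (mi2 E : ℝ) * Complex.I)⁻¹.re := by
    intro k _
    rw [term_re_eq]
    have hlb := muk_lb0 (W := W) hE k
    have hub := muk_ub (L := L) hW (E := E) k
    have hmupos : (0:ℝ) < muk W L E k := by linarith
    rw [div_le_div_iff₀ (by positivity) (by positivity)]
    have hq : (muk W L E k)^2 ≤ 14*(W:ℝ)^2 * muk W L E k := by nlinarith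
    have h4 : (4:ℝ) ≤ (W:ℝ)^2 := by nlinarith
    nlinarith
  have hsum := Finset.card_nsmul_le_sum (Finset.univ : Finset (Torus L))
    (fun k => ((((muk W L E k : ℝ)) : ℂ) + (mi2 E : ℝ) * Complex.I)⁻¹.re)
    (1/(518*(W:ℝ)^2)) hterm
  rw [Finset.card_univ, card_torus hL, nsmul_eq_mul] at hsum
  have hN : (0:ℝ) < (W:ℝ)^3 := by positivity
  have key : 1/518 / (W:ℝ)^2 = ((W:ℝ)^3)⁻¹ * (((W^3 : ℕ):ℝ) * (1/(518*(W:ℝ)^2))) := by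
    push_cast
    field_simp
  rw [key]
  exact mul_le_mul_of_nonneg_left hsum (by positivity)

lemma final_im {W : ℕ} (hW : 2 ≤ W) (hL : ∀ i, L i = W) {E : ℝ} (hE : |E| ≤ 1.8)
    (j : Torus L) : |(Bmat L W E j j).im| ≤ 2592 / (W:ℝ)^3 := by
  have hWR : (2:ℝ) ≤ (W:ℝ) := by exact_mod_cast hW
  have hWpos : (0:ℝ) < (W:ℝ) := by linarith
  have hb := mi2_abs_le hE
  rw [Bdiag_formula hW hL E hE j]
  have hNc : ((W:ℂ)^3)⁻¹ = ((((W:ℝ)^3)⁻¹ : ℝ) : ℂ) := by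
    rw [Complex.ofReal_inv, Complex.ofReal_pow, Complex.ofReal_natCast]
  rw [hNc, Complex.im_ofReal_mul]
  rw [abs_mul, _root_.abs_of_nonneg (by positivity : (0:ℝ) ≤ ((W:ℝ)^3)⁻¹)]
  have habs : |(∑ k : Torus L,
      ((((muk W L E k : ℝ)) : ℂ) + (mi2 E : ℝ) * Complex.I)⁻¹).im| ≤ 2592 := by
    rw [Complex.im_sum]
    refine le_trans (Finset.abs_sum_le_sum_abs _ _) ?_
    have hterm : ∀ k ∈ (Finset.univ : Finset (Torus L)),
        |((((muk W L E k : ℝ)) : ℂ) + (mi2 E : ℝ) * Complex.I)⁻¹.im|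
          ≤ 2 * ((muk W L E k)^2)⁻¹ := by
      intro k _
      rw [term_im_eq]
      have hlb := muk_lb0 (W := W) hE k
      have hmupos : (0:ℝ) < muk W L E k := by linarith
      have hd : (0:ℝ) < (muk W L E k)^2 + (mi2 E)^2 := by positivity
      rw [abs_div, _root_.abs_of_pos hd, abs_neg]
      rw [div_le_iff₀ hd]
      have h1 : (muk W L E k)^2 ≤ (muk W L E k)^2 + (mi2 E)^2 := by nlinarith [sq_nonneg (mi2 E)]
      have h2 : (0:ℝ) < ((muk W L E k)^2)⁻¹ := by positivity
      calc |mi2 E| ≤ 2 := hb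
        _ = 2 * (((muk W L E k)^2)⁻¹ * (muk W L E k)^2) := by
            rw [inv_mul_cancel₀ (by positivity : ((muk W L E k)^2) ≠ 0)]
            ring
        _ ≤ 2 * ((muk W L E k)^2)⁻¹ * ((muk W L E k)^2 + (mi2 E)^2) := by
            rw [mul_assoc]
            refine mul_le_mul_of_nonneg_left ?_ (by norm_num)
            exact mul_le_mul_of_nonneg_left h1 (le_of_lt h2)
    refine le_trans (Finset.sum_le_sum hterm) ?_
    rw [← Finset.mul_sum]
    have := sum_muk_sq_inv hW hL hE
    linarith
  calc ((W:ℝ)^3)⁻¹ * |(∑ k : Torus L,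
        ((((muk W L E k : ℝ)) : ℂ) + (mi2 E : ℝ) * Complex.I)⁻¹).im|
      ≤ ((W:ℝ)^3)⁻¹ * 2592 := mul_le_mul_of_nonneg_left habs (by positivity)
    _ = 2592 / (W:ℝ)^3 := by ring

end BdiagAux
/-- Diagonal estimates for `B`: `Re B_{jj} ≥ c/W²` and `|Im B_{jj}| ≤ K/W³`. -/
theorem Bdiag_estimates (η : ℝ) (hη : 0 < η) :
    ∃ (W₀ : ℕ) (c K : ℝ), 0 < c ∧ 0 < K ∧
      ∀ (W : ℕ), W₀ ≤ W →
      ∀ (L : Fin 3 → ℕ) [∀ i, NeZero (L i)], (∀ i, L i = W) →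
      ∀ E ∈ specI η,
      ∀ j : Torus L,
        c / (W : ℝ) ^ 2 ≤ (Bmat L W E j j).re ∧
        |(Bmat L W E j j).im| ≤ K / (W : ℝ) ^ 3 := by
  refine ⟨2, 1/518, 2592, by norm_num, by norm_num, ?_⟩
  intro W hW L _inst hL E hE j
  exact ⟨BdiagAux.final_re hW hL hE.2 j, BdiagAux.final_im hW hL hE.2 j⟩
end
end

section
/- There exists a constant K, independent of W, Λ, E ∈ 𝓘 and f, such that for every f with 0 < f < 1, the determinant ratio satisfies det(C⁻¹)/det(C_f⁻¹) ≤ K (1 − f)⁻¹ e^{K f |Λ|/W²}, where C_f⁻¹ = C⁻¹ − f m_r²·Id (a positive matrix for 0 < f < 1). -/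
open scoped BigOperators Topology
open Matrix MeasureTheory Filter

noncomputable section

namespace DRB

variable {L : Fin 3 → ℕ} [∀ i, NeZero (L i)]

/-- character -/
def chi (k x : Torus L) : ℂ := ∏ j, ZMod.stdAddChar (k j * x j)

lemma chi_add_right (k x y : Torus L) : chi k (x + y) = chi k x * chi k y := by
  rw [chi, chi, chi, ← Finset.prod_mul_distrib]
  refine Finset.prod_congr rfl fun j _ => ?_
  rw [Pi.add_apply, mul_add, AddChar.map_add_eq_mul]

lemma chi_add_left (k k' x : Torus L) : chi (k + k') x = chi k x * chi k' x := by
  rw [chi, chi, chi, ← Finset.prod_mul_distrib]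
  refine Finset.prod_congr rfl fun j _ => ?_
  rw [Pi.add_apply, add_mul, AddChar.map_add_eq_mul]

lemma chi_zero_right (k : Torus L) : chi k 0 = 1 := by
  simp [chi]

lemma chi_comm (k x : Torus L) : chi k x = chi x k := by
  simp [chi, mul_comm]

lemma chi_unitVec (k : Torus L) (j : Fin 3) :
    chi k (unitVec L j) = ZMod.stdAddChar (k j) := by
  rw [chi]
  rw [Finset.prod_eq_single j]
  · simp [unitVec]
  · intro i _ hij
    simp [unitVec, hij]
  · simp

lemma chi_ne_one (k : Torus L) (j : Fin 3) (h : k j ≠ 0) :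
    chi k (unitVec L j) ≠ 1 := by
  rw [chi_unitVec]
  intro hc
  apply h
  have := ZMod.injective_stdAddChar (N := L j)
  have h0 : ZMod.stdAddChar (0 : ZMod (L j)) = 1 := AddChar.map_zero_eq_one _
  exact this (hc.trans h0.symm)

lemma sum_chi (k : Torus L) :
    ∑ x : Torus L, chi k x = if k = 0 then (Fintype.card (Torus L) : ℂ) else 0 := by
  split_ifs with h
  · subst h
    have : ∀ x : Torus L, chi (0 : Torus L) x = 1 := by
      intro x; simp [chi]
    simp [this, Finset.card_univ]
  · -- pick j with k j ≠ 0
    have hj : ∃ j, k j ≠ 0 := by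
      by_contra hc
      push_neg at hc
      exact h (funext hc)
    obtain ⟨j, hj⟩ := hj
    set e := unitVec L j
    have hshift : chi k e * ∑ x : Torus L, chi k x = ∑ x : Torus L, chi k x := by
      rw [Finset.mul_sum]
      refine Fintype.sum_equiv (Equiv.addRight e) _ _ fun x => ?_
      simp only [Equiv.coe_addRight]
      rw [chi_add_right, mul_comm]
    have := chi_ne_one k j hj
    have hsub : (chi k e - 1) * ∑ x : Torus L, chi k x = 0 := by
      rw [sub_mul, one_mul, hshift, sub_self]
    rcases mul_eq_zero.1 hsub with h1 | h2
    · exact absurd (sub_eq_zero.1 h1) this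
    · exact h2

end DRB

namespace DRB
variable {L : Fin 3 → ℕ} [∀ i, NeZero (L i)]

/-- Fourier matrix -/
def Fmat (L : Fin 3 → ℕ) [∀ i, NeZero (L i)] : Matrix (Torus L) (Torus L) ℂ :=
  Matrix.of fun x k => chi k x

def Bmat' (L : Fin 3 → ℕ) [∀ i, NeZero (L i)] : Matrix (Torus L) (Torus L) ℂ :=
  Matrix.of fun k x => chi (-k) x

lemma B_mul_F : Bmat' L * Fmat L = (Fintype.card (Torus L) : ℂ) • 1 := by
  ext k k'
  rw [Matrix.mul_apply]
  have : ∀ x : Torus L, Bmat' L k x * Fmat L x k' = chi (-k + k') x := by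
    intro x
    rw [Bmat', Fmat, Matrix.of_apply, Matrix.of_apply, chi_add_left, chi_comm k' x]
  simp_rw [this]
  rw [sum_chi]
  have hiff : (-k + k' = 0) ↔ (k = k') := by
    constructor
    · intro h; have := neg_add_eq_zero.mp h; exact this.symm ▸ rfl
    · intro h; subst h; simp
  by_cases h : k = k'
  · subst h; simp
  · rw [if_neg (fun hc => h (hiff.mp hc))]
    simp [Matrix.one_apply_ne h, h]

lemma det_F_ne_zero : (Fmat L).det ≠ 0 := by
  have h := congrArg Matrix.det (B_mul_F (L := L))
  rw [Matrix.det_mul, Matrix.det_smul, Matrix.det_one, mul_one] at h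
  have hcard : (0 : ℕ) < Fintype.card (Torus L) := Fintype.card_pos
  have : ((Fintype.card (Torus L) : ℂ)) ^ Fintype.card (Torus L) ≠ 0 := by
    apply pow_ne_zero
    exact_mod_cast hcard.ne'
  intro hF
  rw [hF, mul_zero] at h
  exact this h.symm

/-- eigenvalue function -/
def lam (L : Fin 3 → ℕ) [∀ i, NeZero (L i)] (k : Torus L) : ℝ :=
  ∑ j, (2 - 2 * Real.cos (2 * Real.pi * ((k j).val : ℝ) / (L j : ℝ)))

lemma stdAddChar_eq_exp {n : ℕ} [NeZero n] (a : ZMod n) :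
    ZMod.stdAddChar a = Complex.exp ((2 * Real.pi * (a.val : ℝ) / (n : ℝ) : ℝ) * Complex.I) := by
  have h1 : ((a.val : ℤ) : ZMod n) = a := by
    simp [ZMod.natCast_zmod_val]
  have h2 := ZMod.stdAddChar_coe (N := n) (a.val : ℤ)
  rw [h1] at h2
  rw [h2]
  congr 1
  push_cast
  ring

lemma exp_I_add_exp_neg (s : ℝ) :
    Complex.exp ((s : ℂ) * Complex.I) + Complex.exp (((-s : ℝ) : ℂ) * Complex.I)
      = ((2 * Real.cos s : ℝ) : ℂ) := by
  rw [Complex.exp_mul_I, Complex.exp_mul_I]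
  push_cast
  simp only [Complex.cos_neg, Complex.sin_neg, ← Complex.ofReal_cos]
  ring

lemma stdAddChar_add_inv {n : ℕ} [NeZero n] (a : ZMod n) :
    ZMod.stdAddChar a + ZMod.stdAddChar (-a)
      = ((2 * Real.cos (2 * Real.pi * (a.val : ℝ) / (n : ℝ)) : ℝ) : ℂ) := by
  have hneg : ZMod.stdAddChar (-a) = (ZMod.stdAddChar a)⁻¹ := by
    have h := AddChar.map_add_eq_mul (ZMod.stdAddChar (N := n)) a (-a)
    rw [add_neg_cancel, AddChar.map_zero_eq_one] at h
    exact (eq_inv_of_mul_eq_one_right h.symm).symm ▸ rfl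
  set t : ℝ := 2 * Real.pi * (a.val : ℝ) / (n : ℝ) with ht
  have he := stdAddChar_eq_exp a
  rw [hneg, he, ← Complex.exp_neg]
  have : -((t : ℂ) * Complex.I) = ((-t : ℝ) : ℂ) * Complex.I := by push_cast; ring
  rw [this]
  exact exp_I_add_exp_neg t

end DRB

namespace DRB
variable {L : Fin 3 → ℕ} [∀ i, NeZero (L i)]

lemma chi_neg_unitVec (k : Torus L) (j : Fin 3) :
    chi k (-(unitVec L j)) = ZMod.stdAddChar (-(k j)) := by
  rw [chi, Finset.prod_eq_single j]
  · simp [unitVec]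
  · intro i _ hij
    simp [unitVec, hij]
  · simp

lemma sum_lapC_mul_chi (k x : Torus L) :
    ∑ y, ((lap L).map Complex.ofReal) x y * chi k y
      = ((∑ j, (ZMod.stdAddChar (k j) + ZMod.stdAddChar (-(k j)))) - 6) * chi k x := by
  have hentry : ∀ y, ((lap L).map Complex.ofReal) x y
      = (∑ i : Fin 3, ((if y = x + unitVec L i then (1:ℂ) else 0)
          + (if y = x - unitVec L i then (1:ℂ) else 0))) - (if y = x then (6:ℂ) else 0) := by
    intro y
    simp only [Matrix.map_apply, lap, Matrix.of_apply]
    push_cast [apply_ite Complex.ofReal]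
    rfl
  simp_rw [hentry, sub_mul, Finset.sum_mul, add_mul, ite_mul, one_mul, zero_mul]
  rw [Finset.sum_sub_distrib]
  rw [Finset.sum_comm]
  simp_rw [Finset.sum_add_distrib, Finset.sum_ite_eq', Finset.mem_univ, if_true]
  have h1 : ∀ i : Fin 3, chi k (x + unitVec L i) = ZMod.stdAddChar (k i) * chi k x := by
    intro i; rw [chi_add_right, chi_unitVec, mul_comm]
  have h2 : ∀ i : Fin 3, chi k (x - unitVec L i) = ZMod.stdAddChar (-(k i)) * chi k x := by
    intro i; rw [sub_eq_add_neg, chi_add_right, chi_neg_unitVec, mul_comm]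
  simp_rw [h1, h2]

lemma lam_eq (k : Torus L) :
    ((lam L k : ℝ) : ℂ)
      = 6 - ∑ j, (ZMod.stdAddChar (k j) + ZMod.stdAddChar (-(k j))) := by
  simp_rw [stdAddChar_add_inv]
  rw [lam]
  push_cast
  rw [Finset.sum_sub_distrib]
  simp [Finset.card_univ]
  ring

lemma det_lap_comb (c d : ℝ) :
    (c • (-lap L) + d • (1 : Matrix (Torus L) (Torus L) ℝ)).det
      = ∏ k, (c * lam L k + d) := by
  set M : Matrix (Torus L) (Torus L) ℝ := c • (-lap L) + d • 1 with hM
  have hMc : M.map Complex.ofReal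
      = (c : ℂ) • (-((lap L).map Complex.ofReal)) + (d : ℂ) • 1 := by
    ext x y
    simp only [Matrix.map_apply, hM, Matrix.add_apply, Matrix.smul_apply, Matrix.neg_apply,
      Matrix.one_apply, smul_eq_mul]
    push_cast [apply_ite Complex.ofReal]
    ring
  have key : M.map Complex.ofReal * Fmat L
      = Fmat L * Matrix.diagonal (fun k => ((c * lam L k + d : ℝ) : ℂ)) := by
    ext x k
    rw [Matrix.mul_apply, Matrix.mul_diagonal]
    have : ∀ y, (M.map Complex.ofReal) x y * Fmat L y k
        = (c : ℂ) * (-(((lap L).map Complex.ofReal) x y * chi k y)) + (d : ℂ) *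
            ((if x = y then (1:ℂ) else 0) * chi k y) := by
      intro y
      rw [hMc]
      simp only [Matrix.add_apply, Matrix.smul_apply, Matrix.neg_apply, Matrix.one_apply,
        smul_eq_mul, Fmat, Matrix.of_apply]
      ring
    simp_rw [this]
    rw [Finset.sum_add_distrib, ← Finset.mul_sum, ← Finset.mul_sum]
    simp_rw [Finset.sum_neg_distrib]
    rw [sum_lapC_mul_chi]
    have h2 : ∑ y, (if x = y then (1:ℂ) else 0) * chi k y = chi k x := by
      simp_rw [ite_mul, one_mul, zero_mul]
      rw [Finset.sum_ite_eq]
      simp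
    rw [h2]
    have h3 : ((c * lam L k + d : ℝ) : ℂ) = (c:ℂ) * ((lam L k : ℝ):ℂ) + (d:ℂ) := by push_cast; ring
    rw [Fmat, Matrix.of_apply, h3, lam_eq]
    ring
  have hdet := congrArg Matrix.det key
  rw [Matrix.det_mul, Matrix.det_mul, Matrix.det_diagonal] at hdet
  have hcancel : (M.map Complex.ofReal).det = ∏ k, ((c * lam L k + d : ℝ) : ℂ) := by
    have := mul_right_cancel₀ (det_F_ne_zero (L := L)) (hdet.trans (mul_comm _ _))
    exact this
  have hre : ((M.det : ℝ) : ℂ) = (M.map Complex.ofReal).det := by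
    have h := RingHom.map_det Complex.ofRealHom M
    rwa [RingHom.mapMatrix_apply] at h
  rw [← hre] at hcancel
  rw [← Complex.ofReal_prod] at hcancel
  exact_mod_cast hcancel

end DRB

namespace DRB
variable {L : Fin 3 → ℕ} [∀ i, NeZero (L i)]

lemma term_nonneg (t : ℝ) : 0 ≤ 2 - 2 * Real.cos t := by
  have := Real.cos_le_one t
  linarith

lemma lam_nonneg (k : Torus L) : 0 ≤ lam L k :=
  Finset.sum_nonneg fun j _ => term_nonneg _

lemma lam_zero : lam L 0 = 0 := by
  rw [lam]
  refine Finset.sum_eq_zero fun j _ => ?_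
  have : ((0 : Torus L) j).val = 0 := ZMod.val_zero
  rw [Pi.zero_apply] at this ⊢
  rw [this]
  norm_num

lemma cos_bound {n : ℕ} [NeZero n] (a : ZMod n) :
    16 * ((zdist a : ℝ) / n) ^ 2 ≤ 2 - 2 * Real.cos (2 * Real.pi * (a.val : ℝ) / n) := by
  have hn : 0 < (n : ℝ) := by
    exact_mod_cast Nat.pos_of_ne_zero (NeZero.ne n)
  set u : ℝ := (a.val : ℝ) / n with hu
  have hval : (a.val : ℝ) < n := by exact_mod_cast ZMod.val_lt a
  have hu0 : 0 ≤ u := div_nonneg (Nat.cast_nonneg _) hn.le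
  have hu1 : u < 1 := (div_lt_one hn).2 hval
  have hzd : (zdist a : ℝ) / n = min u (1 - u) := by
    have h1 : (zdist a : ℝ) = min ((a.val : ℝ)) ((n : ℝ) - (a.val : ℝ)) := by
      rw [zdist, Nat.cast_min, Nat.cast_sub (ZMod.val_lt a).le]
    rw [h1, ← min_div_div_right hn.le, hu]
    congr 1
    field_simp
  have hw0 : 0 ≤ min u (1 - u) := le_min hu0 (by linarith)
  have hsin : 2 * min u (1 - u) ≤ Real.sin (Real.pi * u) := by
    have hpi : 0 < Real.pi := Real.pi_pos
    rcases le_or_gt u (1 / 2) with hc | hc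
    · have h1 : 2 / Real.pi * (Real.pi * u) ≤ Real.sin (Real.pi * u) :=
        Real.mul_le_sin (by positivity) (by nlinarith)
      have h2 : 2 / Real.pi * (Real.pi * u) = 2 * u := by field_simp
      have h3 : min u (1 - u) ≤ u := min_le_left _ _
      nlinarith
    · have hx : Real.pi * u = Real.pi - Real.pi * (1 - u) := by ring
      rw [hx, Real.sin_pi_sub]
      have h1 : 2 / Real.pi * (Real.pi * (1 - u)) ≤ Real.sin (Real.pi * (1 - u)) :=
        Real.mul_le_sin (by nlinarith) (by nlinarith)
      have h2 : 2 / Real.pi * (Real.pi * (1 - u)) = 2 * (1 - u) := by field_simp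
      have h3 : min u (1 - u) ≤ 1 - u := min_le_right _ _
      nlinarith
  have hcos : Real.cos (2 * Real.pi * (a.val : ℝ) / n) = 1 - 2 * Real.sin (Real.pi * u) ^ 2 := by
    have harg : 2 * Real.pi * (a.val : ℝ) / n = 2 * (Real.pi * u) := by
      rw [hu]; ring
    rw [harg, Real.cos_two_mul']
    nlinarith [Real.sin_sq_add_cos_sq (Real.pi * u)]
  rw [hzd, hcos]
  nlinarith [hsin, hw0]

lemma lam_lower (k : Torus L) (j : Fin 3) :
    16 * ((zdist (k j) : ℝ) / (L j)) ^ 2 ≤ lam L k := by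
  refine le_trans (cos_bound (k j)) ?_
  rw [lam]
  exact Finset.single_le_sum
    (f := fun i => 2 - 2 * Real.cos (2 * Real.pi * ((k i).val : ℝ) / (L i)))
    (fun i _ => term_nonneg _) (Finset.mem_univ j)

lemma zdist_pos {n : ℕ} [NeZero n] {a : ZMod n} (ha : a ≠ 0) : 0 < zdist a := by
  rw [zdist]
  have h1 : 0 < a.val := by
    rcases Nat.eq_zero_or_pos a.val with h | h
    · exact absurd ((ZMod.val_eq_zero a).mp h) ha
    · exact h
  have h2 : a.val < n := ZMod.val_lt a
  omega

lemma zdist_le {n : ℕ} (a : ZMod n) [NeZero n] : zdist a ≤ n := by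
  rw [zdist]
  have := ZMod.val_lt a
  omega

end DRB

namespace DRB

lemma log_le_self' {x : ℝ} (hx : 0 ≤ x) : Real.log (1 + x) ≤ x := by
  have := Real.log_le_sub_one_of_pos (show (0:ℝ) < 1 + x by linarith)
  linarith

lemma log_one_add_sq {x : ℝ} (hx : 0 ≤ x) :
    Real.log (1 + x ^ 2) ≤ 2 * Real.log (1 + x) := by
  have h1 : (1:ℝ) + x ^ 2 ≤ (1 + x) ^ 2 := by nlinarith
  have h2 : Real.log (1 + x ^ 2) ≤ Real.log ((1 + x) ^ 2) :=
    Real.log_le_log (by positivity) h1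
  rwa [Real.log_pow, Nat.cast_ofNat] at h2

lemma log_le_two_sqrt {y : ℝ} (hy : 0 ≤ y) : Real.log (1 + y) ≤ 2 * Real.sqrt y := by
  have h := log_one_add_sq (Real.sqrt_nonneg y)
  rw [Real.sq_sqrt hy] at h
  have h2 : Real.log (1 + Real.sqrt y) ≤ Real.sqrt y := log_le_self' (Real.sqrt_nonneg y)
  linarith

lemma log_le_four_rt4 {y : ℝ} (hy : 0 ≤ y) :
    Real.log (1 + y) ≤ 4 * Real.sqrt (Real.sqrt y) := by
  have h := log_one_add_sq (Real.sqrt_nonneg y)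
  rw [Real.sq_sqrt hy] at h
  have h2 := log_le_two_sqrt (Real.sqrt_nonneg y)
  linarith

lemma sum_inv_sqrt (n : ℕ) :
    ∑ d ∈ Finset.Icc 1 n, 1 / Real.sqrt d ≤ 2 * Real.sqrt n := by
  induction n with
  | zero => simp
  | succ n ih =>
    rw [Finset.sum_Icc_succ_top (by omega : 1 ≤ n + 1)]
    have h1 : (0:ℝ) < Real.sqrt (n + 1) := Real.sqrt_pos.2 (by positivity)
    have hkey : Real.sqrt n * Real.sqrt (n + 1) ≤ (n : ℝ) + 1 / 2 := by
      rw [← Real.sqrt_mul (Nat.cast_nonneg n)]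
      have h2 : (n:ℝ) * (n + 1) ≤ ((n:ℝ) + 1 / 2) ^ 2 := by nlinarith
      calc Real.sqrt ((n:ℝ) * (n + 1)) ≤ Real.sqrt (((n:ℝ) + 1 / 2) ^ 2) :=
            Real.sqrt_le_sqrt h2
        _ = (n:ℝ) + 1 / 2 := Real.sqrt_sq (by positivity)
    have hs : Real.sqrt (n + 1) * Real.sqrt (n + 1) = (n : ℝ) + 1 := by
      rw [Real.mul_self_sqrt (by positivity)]
    have hstep : 1 / Real.sqrt ((n:ℝ) + 1) ≤ 2 * Real.sqrt (n + 1) - 2 * Real.sqrt n := by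
      rw [div_le_iff₀ h1]
      nlinarith
    have hcast : ((n + 1 : ℕ) : ℝ) = (n : ℝ) + 1 := by push_cast; ring
    rw [hcast]
    linarith

end DRB

namespace DRB

lemma card_zdist_le (n : ℕ) [NeZero n] {c : ℝ} (hc : 0 ≤ c) :
    (((Finset.univ : Finset (ZMod n)).filter (fun b => (zdist b : ℝ) ≤ c)).card : ℝ)
      ≤ 2 * c + 2 := by
  classical
  set D := Nat.floor c with hD
  have hsub : (Finset.univ : Finset (ZMod n)).filter (fun b => (zdist b : ℝ) ≤ c) ⊆
      (Finset.range (D + 1)).image (fun i : ℕ => (i : ZMod n)) ∪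
      (Finset.range (D + 1)).image (fun i : ℕ => -(i : ZMod n)) := by
    intro b hb
    rw [Finset.mem_filter] at hb
    have hzd : zdist b ≤ D := Nat.le_floor hb.2
    have hmin : min b.val (n - b.val) ≤ D := by rw [zdist] at hzd; exact hzd
    rcases min_le_iff.mp hmin with h | h
    · apply Finset.mem_union_left
      refine Finset.mem_image.mpr ⟨b.val, Finset.mem_range.mpr (by omega), ?_⟩
      exact ZMod.natCast_zmod_val b
    · apply Finset.mem_union_right
      refine Finset.mem_image.mpr ⟨n - b.val, Finset.mem_range.mpr (by omega), ?_⟩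
      have hle : b.val ≤ n := (ZMod.val_lt b).le
      rw [Nat.cast_sub hle, ZMod.natCast_self, ZMod.natCast_zmod_val, zero_sub, neg_neg]
  have h1 : ((Finset.univ : Finset (ZMod n)).filter (fun b => (zdist b : ℝ) ≤ c)).card
      ≤ (D + 1) + (D + 1) := by
    refine (Finset.card_le_card hsub).trans ?_
    refine (Finset.card_union_le _ _).trans ?_
    have := Finset.card_image_le (s := Finset.range (D + 1)) (f := fun i : ℕ => (i : ZMod n))
    have := Finset.card_image_le (s := Finset.range (D + 1)) (f := fun i : ℕ => -(i : ZMod n))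
    simp_all [Finset.card_range]
    omega
  have hDc : (D : ℝ) ≤ c := Nat.floor_le hc
  have := h1
  push_cast
  calc (((Finset.univ : Finset (ZMod n)).filter (fun b => (zdist b : ℝ) ≤ c)).card : ℝ)
      ≤ ((D + 1) + (D + 1) : ℕ) := by exact_mod_cast h1
    _ ≤ 2 * c + 2 := by push_cast; linarith

lemma sum_zdist_fiber {n : ℕ} [NeZero n] (h : ℕ → ℝ) (h0 : ∀ d, 0 ≤ h d) :
    ∑ a ∈ (Finset.univ : Finset (ZMod n)).erase 0, h (zdist a)
      ≤ 2 * ∑ d ∈ Finset.Icc 1 n, h d := by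
  classical
  have hmaps : ∀ a ∈ (Finset.univ : Finset (ZMod n)).erase 0, zdist a ∈ Finset.Icc 1 n := by
    intro a ha
    have ha0 : a ≠ 0 := (Finset.mem_erase.mp ha).1
    exact Finset.mem_Icc.mpr ⟨zdist_pos ha0, zdist_le a⟩
  rw [← Finset.sum_fiberwise_of_maps_to hmaps (fun a => h (zdist a))]
  rw [Finset.mul_sum]
  refine Finset.sum_le_sum fun d hd => ?_
  have hcard : (((Finset.univ : Finset (ZMod n)).erase 0).filter
      (fun a => zdist a = d)).card ≤ 2 := by
    have hsub2 : (((Finset.univ : Finset (ZMod n)).erase 0).filter (fun a => zdist a = d))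
        ⊆ {(d : ZMod n), -(d : ZMod n)} := by
      intro a ha
      rw [Finset.mem_filter] at ha
      have hzd := ha.2
      rw [zdist] at hzd
      have hval : a.val ≤ n := (ZMod.val_lt a).le
      have hcases : a.val = d ∨ a.val = n - d := by omega
      rcases hcases with heq | hvd
      · have : a = (d : ZMod n) := by rw [← heq, ZMod.natCast_zmod_val]
        simp [this]
      · have hdn : d ≤ n := by omega
        have : a = -(d : ZMod n) := by
          rw [← ZMod.natCast_zmod_val a, hvd, Nat.cast_sub hdn, ZMod.natCast_self, zero_sub]
        simp [this]
    refine (Finset.card_le_card hsub2).trans ?_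
    exact (Finset.card_insert_le _ _).trans (by simp)
  have hsum : ∑ a ∈ (((Finset.univ : Finset (ZMod n)).erase 0).filter
      (fun a => zdist a = d)), h (zdist a)
      = (((Finset.univ : Finset (ZMod n)).erase 0).filter
      (fun a => zdist a = d)).card • h d := by
    rw [← Finset.sum_const]
    refine Finset.sum_congr rfl fun a ha => ?_
    rw [(Finset.mem_filter.mp ha).2]
  rw [hsum]
  rw [nsmul_eq_mul]
  have := h0 d
  have hc2 : ((((Finset.univ : Finset (ZMod n)).erase 0).filter
      (fun a => zdist a = d)).card : ℝ) ≤ 2 := by exact_mod_cast hcard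
  nlinarith

end DRB

namespace DRB
variable {L : Fin 3 → ℕ} [∀ i, NeZero (L i)]

lemma fin3_cases (i j : Fin 3) : i = j ∨ i = j + 1 ∨ i = j + 2 := by
  fin_cases i <;> fin_cases j <;> decide

lemma hL_pos (i : Fin 3) : 0 < (L i : ℝ) := by
  exact_mod_cast Nat.pos_of_ne_zero (NeZero.ne (L i))

lemma prod_L (j : Fin 3) :
    (Fintype.card (Torus L) : ℝ) = (L j : ℝ) * ((L (j+1) : ℝ) * (L (j+2) : ℝ)) := by
  have hcard : Fintype.card (Torus L) = ∏ i, L i := by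
    rw [Fintype.card_pi]
    exact Finset.prod_congr rfl fun i _ => ZMod.card (L i)
  rw [hcard]
  push_cast
  rw [Fin.prod_univ_three]
  fin_cases j <;> simp <;> ring

lemma zdist_zero {n : ℕ} [NeZero n] : zdist (0 : ZMod n) = 0 := by
  simp [zdist, ZMod.val_zero]

set_option maxHeartbeats 1000000 in
lemma per_j_bound (W : ℕ) (hW1 : 1 ≤ W) (hWL : ∀ i, W ≤ L i) {m : ℝ}
    (hm0 : 0 < m) (hm2 : m ≤ 2) (j : Fin 3) (S : Finset (Torus L))
    (hS : ∀ k ∈ S, k ≠ 0 ∧ ∀ i, (zdist (k i) : ℝ) / (L i) ≤ (zdist (k j) : ℝ) / (L j)) :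
    ∑ k ∈ S, Real.log (1 + m / ((W:ℝ)^2 * lam L k))
      ≤ 100 * (Fintype.card (Torus L) : ℝ) / (W:ℝ)^2 := by
  classical
  have hWr : (1:ℝ) ≤ (W:ℝ) := by exact_mod_cast hW1
  have hW0 : (0:ℝ) < (W:ℝ) := by linarith
  have hL := fun i => hL_pos (L := L) i
  have hWL' : ∀ i, (W:ℝ) ≤ (L i : ℝ) := fun i => by exact_mod_cast hWL i
  -- every k in S has k j ≠ 0
  have hkj0 : ∀ k ∈ S, k j ≠ 0 := by
    intro k hk
    obtain ⟨hk0, hmax⟩ := hS k hk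
    obtain ⟨i0, hi0⟩ : ∃ i, k i ≠ 0 := by
      by_contra hc; push_neg at hc; exact hk0 (funext hc)
    have h1 : (0:ℝ) < (zdist (k i0) : ℝ) / L i0 :=
      div_pos (by exact_mod_cast zdist_pos hi0) (hL i0)
    have h2 := hmax i0
    intro hj0
    rw [hj0, zdist_zero] at h2
    simp at h2
    linarith
  -- pointwise log bound
  have hpoint : ∀ k ∈ S, Real.log (1 + m / ((W:ℝ)^2 * lam L k))
      ≤ Real.log (1 + (L j:ℝ)^2 / (8*(W:ℝ)^2*(zdist (k j):ℝ)^2)) := by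
    intro k hk
    have hd : (0:ℝ) < (zdist (k j) : ℝ) := by exact_mod_cast zdist_pos (hkj0 k hk)
    have hlow : 16*((zdist (k j):ℝ)/L j)^2 ≤ lam L k := lam_lower k j
    have hxq : 0 < ((zdist (k j):ℝ)/L j) := div_pos hd (hL j)
    have hq16 : 0 < 16*((zdist (k j):ℝ)/L j)^2 := by
      have := pow_pos hxq 2; nlinarith
    have hlam : 0 < lam L k := lt_of_lt_of_le hq16 hlow
    apply Real.log_le_log (by positivity)
    have hstep : m/((W:ℝ)^2 * lam L k) ≤ (L j:ℝ)^2/(8*(W:ℝ)^2*(zdist (k j):ℝ)^2) := by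
      calc m/((W:ℝ)^2 * lam L k)
          ≤ 2/((W:ℝ)^2 * (16*((zdist (k j):ℝ)/L j)^2)) := by
            apply div_le_div₀ (by norm_num) hm2 (by positivity)
            exact mul_le_mul_of_nonneg_left hlow (by positivity)
        _ = (L j:ℝ)^2/(8*(W:ℝ)^2*(zdist (k j):ℝ)^2) := by
            field_simp
            ring
    linarith
  refine le_trans (Finset.sum_le_sum hpoint) ?_
  -- fiber over a = k j
  have hmaps2 : ∀ k ∈ S, k j ∈ (Finset.univ : Finset (ZMod (L j))).erase 0 :=
    fun k hk => Finset.mem_erase.mpr ⟨hkj0 k hk, Finset.mem_univ _⟩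
  rw [← Finset.sum_fiberwise_of_maps_to hmaps2
    (fun k => Real.log (1 + (L j:ℝ)^2/(8*(W:ℝ)^2*(zdist (k j):ℝ)^2)))]
  have hinner : ∀ a ∈ (Finset.univ : Finset (ZMod (L j))).erase 0,
      ∑ k ∈ S.filter (fun k => k j = a),
          Real.log (1 + (L j:ℝ)^2/(8*(W:ℝ)^2*(zdist (k j):ℝ)^2))
        ≤ ((L (j+1):ℝ)*(L (j+2):ℝ)/(2*(W:ℝ)^2) + 4*(L (j+1):ℝ)/(W:ℝ) + 4*(L (j+2):ℝ)/(W:ℝ))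
          + 16*Real.sqrt (L j)/Real.sqrt (zdist a) := by
    intro a ha
    have ha0 : a ≠ 0 := (Finset.mem_erase.mp ha).1
    have hd : (0:ℝ) < (zdist a : ℝ) := by exact_mod_cast zdist_pos ha0
    set t : ℝ := (zdist a : ℝ)/(L j) with htdef
    have ht : 0 < t := div_pos hd (hL j)
    set l : ℝ := Real.log (1 + 1/(8*(W:ℝ)^2*t^2)) with hldef
    have hval : ∀ k ∈ S.filter (fun k => k j = a),
        Real.log (1 + (L j:ℝ)^2/(8*(W:ℝ)^2*(zdist (k j):ℝ)^2)) = l := by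
      intro k hk
      rw [(Finset.mem_filter.mp hk).2, hldef]
      congr 2
      rw [htdef]
      field_simp
    rw [Finset.sum_congr rfl hval, Finset.sum_const, nsmul_eq_mul]
    -- card bound
    have hcard : ((S.filter (fun k => k j = a)).card : ℝ)
        ≤ (2*(t*(L (j+1):ℝ))+2) * (2*(t*(L (j+2):ℝ))+2) := by
      have hinj : (S.filter (fun k => k j = a)).card ≤
          (((Finset.univ : Finset (ZMod (L (j+1)))).filter
            (fun b => (zdist b:ℝ) ≤ t * L (j+1))).card) *
          (((Finset.univ : Finset (ZMod (L (j+2)))).filter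
            (fun b => (zdist b:ℝ) ≤ t * L (j+2))).card) := by
        rw [← Finset.card_product]
        apply Finset.card_le_card_of_injOn (fun k => (k (j+1), k (j+2)))
        · intro k hk
          rw [Finset.mem_coe, Finset.mem_filter] at hk
          obtain ⟨hkS, hkja⟩ := hk
          have hmax := (hS k hkS).2
          rw [Finset.mem_coe, Finset.mem_product]
          constructor <;>
          · rw [Finset.mem_filter]
            refine ⟨Finset.mem_univ _, ?_⟩
            first
            | (have h := hmax (j+1); rw [hkja] at h
               rw [← htdef] at h
               exact (div_le_iff₀ (hL (j+1))).mp h)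
            | (have h := hmax (j+2); rw [hkja] at h
               rw [← htdef] at h
               exact (div_le_iff₀ (hL (j+2))).mp h)
        · intro k hk k' hk' heq
          have h1 : k (j+1) = k' (j+1) := congrArg Prod.fst heq
          have h2 : k (j+2) = k' (j+2) := congrArg Prod.snd heq
          have h3 : k j = k' j := by
            rw [(Finset.mem_filter.mp hk).2, (Finset.mem_filter.mp hk').2]
          funext i
          rcases fin3_cases i j with h | h | h <;> rw [h] <;> assumption
      have hc1 := card_zdist_le (L (j+1)) (c := t * L (j+1))
        (by positivity)
      have hc2 := card_zdist_le (L (j+2)) (c := t * L (j+2))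
        (by positivity)
      calc ((S.filter (fun k => k j = a)).card : ℝ)
          ≤ ((((Finset.univ : Finset (ZMod (L (j+1)))).filter
              (fun b => (zdist b:ℝ) ≤ t * L (j+1))).card : ℝ)) *
            ((((Finset.univ : Finset (ZMod (L (j+2)))).filter
              (fun b => (zdist b:ℝ) ≤ t * L (j+2))).card : ℝ)) := by exact_mod_cast hinj
        _ ≤ (2*(t*(L (j+1):ℝ))+2) * (2*(t*(L (j+2):ℝ))+2) := by
            apply mul_le_mul hc1 hc2 (Nat.cast_nonneg _) (by positivity)
    -- pointwise bounds on l
    have hx : (0:ℝ) ≤ 1/(8*(W:ℝ)^2*t^2) := by positivity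
    have hl0 : 0 ≤ l := by rw [hldef]; apply Real.log_nonneg; linarith
    have hP1 : t^2 * l ≤ 1/(8*(W:ℝ)^2) := by
      have h := log_le_self' hx
      calc t^2*l ≤ t^2 * (1/(8*(W:ℝ)^2*t^2)) := by
            apply mul_le_mul_of_nonneg_left _ (sq_nonneg t)
            rw [hldef]; exact h
        _ = 1/(8*(W:ℝ)^2) := by field_simp
    have hP2 : t * l ≤ 1/(W:ℝ) := by
      have h2s := log_le_two_sqrt hx
      have ha2 : ((2*(W:ℝ)*t))^2 ≤ 8*(W:ℝ)^2*t^2 := by nlinarith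
      have hsq : Real.sqrt (1/(8*(W:ℝ)^2*t^2)) ≤ 1/(2*(W:ℝ)*t) := by
        rw [one_div, Real.sqrt_inv, one_div]
        apply inv_anti₀ (by positivity)
        have := Real.sqrt_le_sqrt ha2
        rwa [Real.sqrt_sq (by positivity)] at this
      have hl_le : l ≤ 2 * (1/(2*(W:ℝ)*t)) := by
        rw [hldef]
        calc Real.log (1 + 1/(8*(W:ℝ)^2*t^2)) ≤ 2 * Real.sqrt (1/(8*(W:ℝ)^2*t^2)) := h2s
          _ ≤ 2 * (1/(2*(W:ℝ)*t)) := by linarith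
      calc t * l ≤ t * (2*(1/(2*(W:ℝ)*t))) := by
            apply mul_le_mul_of_nonneg_left hl_le ht.le
        _ = 1/(W:ℝ) := by field_simp
    have hP3 : l ≤ 4*Real.sqrt (L j)/Real.sqrt (zdist a) := by
      have h4 := log_le_four_rt4 hx
      have hy : Real.sqrt (1/(8*(W:ℝ)^2*t^2)) ≤ 1/t := by
        rw [one_div, Real.sqrt_inv, one_div]
        apply inv_anti₀ ht
        have hW2 : (1:ℝ) ≤ (W:ℝ)^2 := by nlinarith
        have h8 : t^2 ≤ 8*(W:ℝ)^2*t^2 := by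
          nlinarith [mul_nonneg (sub_nonneg.mpr hW2) (sq_nonneg t)]
        calc t = Real.sqrt (t^2) := (Real.sqrt_sq ht.le).symm
          _ ≤ Real.sqrt (8*(W:ℝ)^2*t^2) := Real.sqrt_le_sqrt h8
      have hrt : Real.sqrt (Real.sqrt (1/(8*(W:ℝ)^2*t^2))) ≤ Real.sqrt (1/t) :=
        Real.sqrt_le_sqrt hy
      have hinv_t : (1:ℝ)/t = (L j : ℝ)/(zdist a : ℝ) := by
        rw [htdef]; field_simp
      have hsplit : Real.sqrt ((L j : ℝ)/(zdist a:ℝ))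
          = Real.sqrt (L j)/Real.sqrt (zdist a) :=
        Real.sqrt_div (Nat.cast_nonneg _) _
      rw [hldef]
      calc Real.log (1 + 1/(8*(W:ℝ)^2*t^2))
          ≤ 4 * Real.sqrt (Real.sqrt (1/(8*(W:ℝ)^2*t^2))) := h4
        _ ≤ 4 * Real.sqrt (1/t) := by linarith
        _ = 4*Real.sqrt (L j)/Real.sqrt (zdist a) := by rw [hinv_t, hsplit]; ring
    -- combine
    calc ((S.filter (fun k => k j = a)).card : ℝ) * l
        ≤ ((2*(t*(L (j+1):ℝ))+2) * (2*(t*(L (j+2):ℝ))+2)) * l :=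
          mul_le_mul_of_nonneg_right hcard hl0
      _ = 4*((L (j+1):ℝ)*(L (j+2):ℝ))*(t^2*l) + 4*(L (j+1):ℝ)*(t*l)
          + 4*(L (j+2):ℝ)*(t*l) + 4*l := by ring
      _ ≤ 4*((L (j+1):ℝ)*(L (j+2):ℝ))*(1/(8*(W:ℝ)^2)) + 4*(L (j+1):ℝ)*(1/(W:ℝ))
          + 4*(L (j+2):ℝ)*(1/(W:ℝ)) + 4*(4*Real.sqrt (L j)/Real.sqrt (zdist a)) := by
          have hl1 := hL (j+1)
          have hl2 := hL (j+2)
          have b1 : 4*((L (j+1):ℝ)*(L (j+2):ℝ))*(t^2*l)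
              ≤ 4*((L (j+1):ℝ)*(L (j+2):ℝ))*(1/(8*(W:ℝ)^2)) := by
            apply mul_le_mul_of_nonneg_left hP1 (by positivity)
          have b2 : 4*(L (j+1):ℝ)*(t*l) ≤ 4*(L (j+1):ℝ)*(1/(W:ℝ)) := by
            apply mul_le_mul_of_nonneg_left hP2 (by positivity)
          have b3 : 4*(L (j+2):ℝ)*(t*l) ≤ 4*(L (j+2):ℝ)*(1/(W:ℝ)) := by
            apply mul_le_mul_of_nonneg_left hP2 (by positivity)
          linarith
      _ = ((L (j+1):ℝ)*(L (j+2):ℝ)/(2*(W:ℝ)^2) + 4*(L (j+1):ℝ)/(W:ℝ)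
          + 4*(L (j+2):ℝ)/(W:ℝ)) + 16*Real.sqrt (L j)/Real.sqrt (zdist a) := by ring
  refine le_trans (Finset.sum_le_sum hinner) ?_
  -- sum over a
  set C : ℝ := (L (j+1):ℝ)*(L (j+2):ℝ)/(2*(W:ℝ)^2) + 4*(L (j+1):ℝ)/(W:ℝ)
      + 4*(L (j+2):ℝ)/(W:ℝ) with hC
  have hC0 : 0 ≤ C := by rw [hC]; positivity
  rw [Finset.sum_add_distrib]
  have hcarderase : (((Finset.univ : Finset (ZMod (L j))).erase 0).card : ℝ) ≤ (L j : ℝ) := by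
    rw [Finset.card_erase_of_mem (Finset.mem_univ _), Finset.card_univ, ZMod.card]
    have : L j - 1 ≤ L j := Nat.sub_le _ _
    exact_mod_cast this
  have hCsum : ∑ _a ∈ (Finset.univ : Finset (ZMod (L j))).erase 0, C ≤ (L j : ℝ) * C := by
    rw [Finset.sum_const, nsmul_eq_mul]
    exact mul_le_mul_of_nonneg_right hcarderase hC0
  have hSqrtSum : ∑ a ∈ (Finset.univ : Finset (ZMod (L j))).erase 0,
      16*Real.sqrt (L j)/Real.sqrt (zdist a) ≤ 64 * (L j : ℝ) := by
    have happ := sum_zdist_fiber (n := L j)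
      (fun d => 16*Real.sqrt (L j)/Real.sqrt (d : ℕ)) (fun d => by positivity)
    refine le_trans happ ?_
    have h1 : ∑ d ∈ Finset.Icc 1 (L j), 16*Real.sqrt (L j)/Real.sqrt (d:ℕ)
        = 16*Real.sqrt (L j) * ∑ d ∈ Finset.Icc 1 (L j), 1/Real.sqrt (d:ℕ) := by
      rw [Finset.mul_sum]
      exact Finset.sum_congr rfl fun d _ => by ring
    rw [h1]
    have h2 := sum_inv_sqrt (L j)
    have h3 : (0:ℝ) ≤ Real.sqrt (L j) := Real.sqrt_nonneg _
    have h4 : Real.sqrt (L j) * Real.sqrt (L j) = (L j : ℝ) :=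
      Real.mul_self_sqrt (Nat.cast_nonneg _)
    have h5 : (0:ℝ) ≤ ∑ d ∈ Finset.Icc 1 (L j), 1/Real.sqrt (d:ℕ) :=
      Finset.sum_nonneg fun d _ => by positivity
    nlinarith
  have hN := prod_L (L := L) j
  have hl1 : (W:ℝ) ≤ (L (j+1) : ℝ) := hWL' (j+1)
  have hl2 : (W:ℝ) ≤ (L (j+2) : ℝ) := hWL' (j+2)
  have hLj := hL j
  have hLp1 := hL (j+1)
  have hLp2 := hL (j+2)
  have key : (L j : ℝ)*C + 64*(L j : ℝ)
      = ((L j:ℝ)*((L (j+1):ℝ)*(L (j+2):ℝ))/2 + 4*(L j:ℝ)*(L (j+1):ℝ)*(W:ℝ)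
        + 4*(L j:ℝ)*(L (j+2):ℝ)*(W:ℝ) + 64*(L j:ℝ)*(W:ℝ)^2)/(W:ℝ)^2 := by
    rw [hC]
    field_simp
  have hfin : (L j : ℝ)*C + 64*(L j : ℝ)
      ≤ 100 * (Fintype.card (Torus L) : ℝ) / (W:ℝ)^2 := by
    rw [key, hN]
    rw [div_le_div_iff₀ (by positivity) (by positivity)]
    have e1 : (L j:ℝ)*(L (j+1):ℝ)*(W:ℝ) ≤ (L j:ℝ)*((L (j+1):ℝ)*(L (j+2):ℝ)) := by
      nlinarith
    have e2 : (L j:ℝ)*(L (j+2):ℝ)*(W:ℝ) ≤ (L j:ℝ)*((L (j+1):ℝ)*(L (j+2):ℝ)) := by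
      nlinarith
    have e3 : (L j:ℝ)*(W:ℝ)^2 ≤ (L j:ℝ)*((L (j+1):ℝ)*(L (j+2):ℝ)) := by
      nlinarith
    nlinarith
  exact le_trans (add_le_add hCsum hSqrtSum) hfin

set_option maxHeartbeats 1000000 in
lemma T_bound (W : ℕ) (hW1 : 1 ≤ W) (hWL : ∀ i, W ≤ L i) {m : ℝ}
    (hm0 : 0 < m) (hm2 : m ≤ 2) :
    ∑ k ∈ (Finset.univ : Finset (Torus L)).erase 0,
        Real.log (1 + m / ((W:ℝ)^2 * lam L k))
      ≤ 300 * (Fintype.card (Torus L) : ℝ) / (W:ℝ)^2 := by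
  classical
  have hex : ∀ k : Torus L, ∃ j, ∀ i,
      (zdist (k i) : ℝ) / L i ≤ (zdist (k j) : ℝ) / L j := by
    intro k
    obtain ⟨j, -, hj⟩ := Finset.exists_max_image Finset.univ
      (fun j => (zdist (k j) : ℝ) / L j) ⟨0, Finset.mem_univ 0⟩
    exact ⟨j, fun i => hj i (Finset.mem_univ i)⟩
  choose jm hjm using hex
  have hmaps : ∀ k ∈ (Finset.univ : Finset (Torus L)).erase 0,
      jm k ∈ (Finset.univ : Finset (Fin 3)) := fun k _ => Finset.mem_univ _
  rw [← Finset.sum_fiberwise_of_maps_to hmaps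
    (fun k => Real.log (1 + m / ((W:ℝ)^2 * lam L k)))]
  have hperj : ∀ j : Fin 3,
      ∑ k ∈ ((Finset.univ : Finset (Torus L)).erase 0).filter (fun k => jm k = j),
        Real.log (1 + m / ((W:ℝ)^2 * lam L k))
      ≤ 100 * (Fintype.card (Torus L) : ℝ) / (W:ℝ)^2 := by
    intro j
    apply per_j_bound W hW1 hWL hm0 hm2 j
    intro k hk
    rw [Finset.mem_filter, Finset.mem_erase] at hk
    obtain ⟨⟨hk0, -⟩, hjmk⟩ := hk
    refine ⟨hk0, fun i => ?_⟩
    have := hjm k i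
    rwa [hjmk] at this
  calc ∑ j : Fin 3, ∑ k ∈ ((Finset.univ : Finset (Torus L)).erase 0).filter
        (fun k => jm k = j), Real.log (1 + m / ((W:ℝ)^2 * lam L k))
      ≤ ∑ _j : Fin 3, 100 * (Fintype.card (Torus L) : ℝ) / (W:ℝ)^2 :=
        Finset.sum_le_sum fun j _ => hperj j
    _ = 300 * (Fintype.card (Torus L) : ℝ) / (W:ℝ)^2 := by
        rw [Finset.sum_const, Finset.card_univ, Fintype.card_fin, nsmul_eq_mul]
        ring

end DRB


set_option maxHeartbeats 1000000 in
/-- Determinant ratio bound: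
`det(C⁻¹)/det(C_f⁻¹) ≤ K (1-f)⁻¹ e^{K f |Λ|/W²}` where `C_f⁻¹ = C⁻¹ - f m_r²·Id`. -/
theorem det_ratio_bound (η : ℝ) (hη : 0 < η) :
    ∃ K : ℝ, 0 < K ∧
      ∀ (W : ℕ), 0 < W →
      ∀ (L : Fin 3 → ℕ) [∀ i, NeZero (L i)], (∀ i, W ∣ L i) →
      ∀ E ∈ specI η,
      ∀ f : ℝ, 0 < f → f < 1 →
        ((Cmat L W E)⁻¹).det / (((Cmat L W E)⁻¹ - (f * mr2 E) • 1).det)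
          ≤ K * (1 - f)⁻¹ *
            Real.exp (K * f * (Fintype.card (Torus L) : ℝ) / (W : ℝ) ^ 2) := by
  refine ⟨300, by norm_num, ?_⟩
  intro W hW L _ hdiv E hE f hf0 hf1
  classical
  have hWL : ∀ i, W ≤ L i := fun i =>
    Nat.le_of_dvd (Nat.pos_of_ne_zero (NeZero.ne (L i))) (hdiv i)
  have hW1 : 1 ≤ W := hW
  have hWr : (1:ℝ) ≤ (W:ℝ) := by exact_mod_cast hW1
  have hW0 : (0:ℝ) < (W:ℝ) := by linarith
  obtain ⟨hE1, hE2⟩ := hE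
  have hEsq : E^2 ≤ 3.24 := by
    have h := abs_le.mp hE2
    nlinarith [h.1, h.2]
  have hm0 : 0 < mr2 E := by rw [mr2]; nlinarith
  have hm2 : mr2 E ≤ 2 := by rw [mr2]; nlinarith [sq_nonneg E]
  set m := mr2 E with hmdef
  set N : ℝ := (Fintype.card (Torus L) : ℝ) with hN
  set A : Matrix (Torus L) (Torus L) ℝ := ((W : ℝ) ^ 2) • (-lap L) + m • 1 with hA
  have hdetA : A.det = ∏ k, ((W:ℝ)^2 * DRB.lam L k + m) := DRB.det_lap_comb _ _
  have hlamnn : ∀ k : Torus L, 0 ≤ DRB.lam L k := DRB.lam_nonneg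
  have hfacpos : ∀ k : Torus L, 0 < (W:ℝ)^2 * DRB.lam L k + m := by
    intro k
    have h1 : 0 ≤ (W:ℝ)^2 * DRB.lam L k := mul_nonneg (sq_nonneg _) (hlamnn k)
    linarith
  have hApos : 0 < A.det := by
    rw [hdetA]; exact Finset.prod_pos fun k _ => hfacpos k
  have hCinv : (Cmat L W E)⁻¹ = A := by
    rw [Cmat]
    exact Matrix.nonsing_inv_nonsing_inv A (isUnit_iff_ne_zero.mpr hApos.ne')
  have h1f : (0:ℝ) < 1 - f := by linarith
  have hAf : A - (f*m) • 1 = ((W : ℝ) ^ 2) • (-lap L) + ((1-f)*m) • 1 := by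
    rw [hA]
    have hcoef : (1-f)*m = m - f*m := by ring
    rw [hcoef, sub_smul]
    abel
  have hdetAf : (A - (f*m) • 1).det = ∏ k, ((W:ℝ)^2 * DRB.lam L k + (1-f)*m) := by
    rw [hAf]; exact DRB.det_lap_comb _ _
  have hfacpos2 : ∀ k : Torus L, 0 < (W:ℝ)^2 * DRB.lam L k + (1-f)*m := by
    intro k
    have h1 : 0 ≤ (W:ℝ)^2 * DRB.lam L k := mul_nonneg (sq_nonneg _) (hlamnn k)
    nlinarith
  have hAfpos : 0 < (A - (f*m) • 1).det := by
    rw [hdetAf]; exact Finset.prod_pos fun k _ => hfacpos2 k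
  rw [hCinv, div_le_iff₀ hAfpos]
  -- split off the zero mode
  have hzero1 : (W:ℝ)^2 * DRB.lam L (0 : Torus L) + m = m := by
    rw [DRB.lam_zero]; ring
  have hzero2 : (W:ℝ)^2 * DRB.lam L (0 : Torus L) + (1-f)*m = (1-f)*m := by
    rw [DRB.lam_zero]; ring
  set P1 : ℝ := ∏ k ∈ Finset.univ.erase (0 : Torus L), ((W:ℝ)^2 * DRB.lam L k + m) with hP1
  set P2 : ℝ := ∏ k ∈ Finset.univ.erase (0 : Torus L),
    ((W:ℝ)^2 * DRB.lam L k + (1-f)*m) with hP2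
  have hsplit1 : A.det = m * P1 := by
    rw [hdetA, ← Finset.mul_prod_erase Finset.univ _ (Finset.mem_univ (0 : Torus L)), hzero1]
  have hsplit2 : (A - (f*m) • 1).det = ((1-f)*m) * P2 := by
    rw [hdetAf, ← Finset.mul_prod_erase Finset.univ _ (Finset.mem_univ (0 : Torus L)), hzero2]
  have hP2pos : 0 < P2 := Finset.prod_pos fun k _ => hfacpos2 k
  set T : ℝ := ∑ k ∈ Finset.univ.erase (0 : Torus L),
    Real.log (1 + m/((W:ℝ)^2 * DRB.lam L k)) with hT
  -- per-mode bound
  have hperk : ∀ k ∈ Finset.univ.erase (0 : Torus L),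
      (W:ℝ)^2 * DRB.lam L k + m
        ≤ Real.exp (f * Real.log (1 + m/((W:ℝ)^2 * DRB.lam L k)))
          * ((W:ℝ)^2 * DRB.lam L k + (1-f)*m) := by
    intro k hk
    have hk0 : k ≠ 0 := (Finset.mem_erase.mp hk).1
    obtain ⟨i0, hi0⟩ : ∃ i, k i ≠ 0 := by
      by_contra hc; push_neg at hc; exact hk0 (funext hc)
    have hdpos : (0:ℝ) < (zdist (k i0) : ℝ) := by exact_mod_cast DRB.zdist_pos hi0
    have hxq : 0 < ((zdist (k i0):ℝ)/(L i0 : ℝ)) := div_pos hdpos (DRB.hL_pos i0)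
    have hlam : 0 < DRB.lam L k :=
      lt_of_lt_of_le (by nlinarith [pow_pos hxq 2]) (DRB.lam_lower k i0)
    set y : ℝ := (W:ℝ)^2 * DRB.lam L k with hy
    have hy0 : 0 < y := by rw [hy]; exact mul_pos (pow_pos hW0 2) hlam
    have hgm : (y+m)^(1-f) * y^f ≤ y + (1-f)*m := by
      have h := Real.geom_mean_le_arith_mean2_weighted
        (by linarith : (0:ℝ) ≤ 1-f) hf0.le (by linarith : (0:ℝ) ≤ y+m) hy0.le (by ring)
      calc (y+m)^(1-f) * y^f ≤ (1-f)*(y+m) + f*y := h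
        _ = y + (1-f)*m := by ring
    have hsum : (y+m) = ((1 + m/y)^f) * ((y+m)^(1-f) * y^f) := by
      have hmul : (1 + m/y) * y = y + m := by field_simp
      have h4 : (1+m/y)^f * y^f = (y+m)^f := by
        rw [← Real.mul_rpow (by positivity) hy0.le, hmul]
      calc (y+m) = (y+m)^(f + (1-f)) := by
            rw [show f + (1-f) = (1:ℝ) by ring, Real.rpow_one]
        _ = (y+m)^f * (y+m)^(1-f) := Real.rpow_add (by linarith) _ _
        _ = ((1+m/y)^f * y^f) * (y+m)^(1-f) := by rw [h4]
        _ = ((1 + m/y)^f) * ((y+m)^(1-f) * y^f) := by ring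
    have hexp : (1 + m/y)^f = Real.exp (f * Real.log (1 + m/y)) := by
      rw [Real.rpow_def_of_pos (by positivity)]
      ring_nf
    calc y + m = ((1+m/y)^f) * ((y+m)^(1-f)*y^f) := hsum
      _ ≤ ((1+m/y)^f) * (y + (1-f)*m) :=
          mul_le_mul_of_nonneg_left hgm (Real.rpow_nonneg (by positivity) f)
      _ = Real.exp (f * Real.log (1+m/y)) * (y+(1-f)*m) := by rw [hexp]
  have hprod : P1 ≤ Real.exp (f*T) * P2 := by
    have hstep : P1 ≤ ∏ k ∈ Finset.univ.erase (0 : Torus L),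
        (Real.exp (f * Real.log (1 + m/((W:ℝ)^2 * DRB.lam L k)))
          * ((W:ℝ)^2 * DRB.lam L k + (1-f)*m)) := by
      rw [hP1]
      refine Finset.prod_le_prod (fun k _ => (hfacpos k).le) hperk
    refine hstep.trans ?_
    rw [Finset.prod_mul_distrib, ← Real.exp_sum, hT, ← Finset.mul_sum, hP2]
  have hTb : T ≤ 300 * N / (W:ℝ)^2 := by
    rw [hT, hN]
    exact DRB.T_bound W hW1 hWL hm0 hm2
  have hexple : Real.exp (f*T) ≤ Real.exp (300 * f * N / (W:ℝ)^2) := by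
    apply Real.exp_le_exp.mpr
    calc f*T ≤ f * (300 * N / (W:ℝ)^2) := mul_le_mul_of_nonneg_left hTb hf0.le
      _ = 300 * f * N / (W:ℝ)^2 := by ring
  have hexppos : (0:ℝ) < Real.exp (300 * f * N / (W:ℝ)^2) := Real.exp_pos _
  calc A.det = m * P1 := hsplit1
    _ ≤ m * (Real.exp (f*T) * P2) := mul_le_mul_of_nonneg_left hprod hm0.le
    _ ≤ m * (Real.exp (300 * f * N / (W:ℝ)^2) * P2) := by
        apply mul_le_mul_of_nonneg_left _ hm0.le
        exact mul_le_mul_of_nonneg_right hexple hP2pos.le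
    _ = (1-f)⁻¹ * Real.exp (300 * f * N / (W:ℝ)^2) * (((1-f)*m) * P2) := by
        field_simp
    _ ≤ 300 * ((1-f)⁻¹ * Real.exp (300 * f * N / (W:ℝ)^2) * (((1-f)*m) * P2)) := by
        have hpos : 0 ≤ (1-f)⁻¹ * Real.exp (300 * f * N / (W:ℝ)^2) * (((1-f)*m) * P2) :=
          mul_nonneg (mul_nonneg (inv_nonneg.mpr h1f.le) hexppos.le)
            (mul_nonneg (mul_nonneg h1f.le hm0.le) hP2pos.le)
        exact le_mul_of_one_le_left hpos (by norm_num)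
    _ = 300 * (1-f)⁻¹ * Real.exp (300 * f * N / (W:ℝ)^2) * (A - (f*m) • 1).det := by
        rw [hsplit2]
        ring
end
end
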